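/- In the geometric realization of a connected simply connected Cartan graph 𝒞 with real root system, let b, b' ∈ A, x ∈ K^b, y ∈ K^{b'}, and let Γ(b,b') denote the set of minimal galleries from K^b to K^{b'}. Then the closed segment [x,y] is contained in the union of the closures cl(K^c) over all chambers K^c occurring in some minimal gallery in Γ(b,b'). Moreover, the set of chambers occurring in minimal galleries in Γ(b,b') is finite. -/

import Mathlib

open Set

noncomputable section

section Arrangements

variable {V : Type*} [AddCommGroup V] [Module ℝ V] [TopologicalSpace V]

/-- The kernel of a linear functional, as a subset of `V`. -/
def dualKer (α : Module.Dual ℝ V) : Set V := {v | α v = 0}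

/-- A linear hyperplane: the kernel of a nonzero linear functional. -/
def IsLinearHyperplane (H : Set V) : Prop :=
  ∃ α : Module.Dual ℝ V, α ≠ 0 ∧ H = dualKer α

/-- A hyperplane arrangement `(𝒜, T)`: `T` is an open convex cone, `𝒜` a set of linear
hyperplanes, each meeting `T`, which is locally finite in `T`. -/
structure IsHyperplaneArrangement (𝒜 : Set (Set V)) (T : Set V) : Prop where
  T_nonempty : T.Nonempty
  T_open : IsOpen T
  T_convex : Convex ℝ T
  T_cone : ∀ x ∈ T, ∀ c : ℝ, 0 < c → c • x ∈ T
  hyperplanes : ∀ H ∈ 𝒜, IsLinearHyperplane H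
  meets : ∀ H ∈ 𝒜, (H ∩ T).Nonempty
  locallyFinite : ∀ x ∈ T, ∃ U : Set V, IsOpen U ∧ x ∈ U ∧ U ⊆ T ∧
    {H ∈ 𝒜 | (H ∩ U).Nonempty}.Finite

/-- The chambers: connected components of `T \ ⋃ 𝒜`. -/
def chambersOf (𝒜 : Set (Set V)) (T : Set V) : Set (Set V) :=
  {K | ∃ x ∈ T \ ⋃₀ 𝒜, K = connectedComponentIn (T \ ⋃₀ 𝒜) x}

/-- `H` is a wall of the chamber `K`: a hyperplane missing `K` such that
`H ∩ cl(K)` spans `H`. -/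
def IsWall (K H : Set V) : Prop :=
  IsLinearHyperplane H ∧ H ∩ K = ∅ ∧
    (Submodule.span ℝ (H ∩ closure K) : Set V) = H

/-- An open simplicial cone: `⋂_{α ∈ B} α⁻¹(ℝ_{>0})` for a basis `B` of the dual space. -/
def IsOpenSimplicialCone (K : Set V) : Prop :=
  ∃ b : Module.Basis (Fin (Module.finrank ℝ V)) ℝ (Module.Dual ℝ V),
    K = {v | ∀ i, 0 < b i v}

/-- A Tits arrangement: a hyperplane arrangement all of whose chambers are open simplicial
cones (simplicial) and such that every wall of every chamber belongs to `𝒜` (thin). -/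
structure IsTitsArrangement (𝒜 : Set (Set V)) (T : Set V) extends
    IsHyperplaneArrangement 𝒜 T : Prop where
  simplicial : ∀ K ∈ chambersOf 𝒜 T, IsOpenSimplicialCone K
  thin : ∀ K ∈ chambersOf 𝒜 T, ∀ H : Set V, IsWall K H → H ∈ 𝒜

/-- `R` is a root system with associated arrangement `𝒜`: `0 ∉ R`, `R = -R` and
`𝒜 = {ker α | α ∈ R}`. -/
def IsAssociatedRootSystem (𝒜 : Set (Set V)) (R : Set (Module.Dual ℝ V)) : Prop :=
  (0 : Module.Dual ℝ V) ∉ R ∧ (∀ α ∈ R, -α ∈ R) ∧ 𝒜 = {H | ∃ α ∈ R, H = dualKer α}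

/-- The root basis `B^K` of a chamber `K`. -/
def rootBasisOf (R : Set (Module.Dual ℝ V)) (K : Set V) : Set (Module.Dual ℝ V) :=
  {α ∈ R | IsWall K (dualKer α) ∧ ∀ x ∈ K, 0 < α x}

/-- `β` is a non-negative real linear combination of elements of `B`. -/
def InNNRealSpan (B : Set (Module.Dual ℝ V)) (β : Module.Dual ℝ V) : Prop :=
  ∃ (s : Finset (Module.Dual ℝ V)) (c : Module.Dual ℝ V → ℝ),
    ↑s ⊆ B ∧ (∀ α ∈ s, 0 ≤ c α) ∧ β = ∑ α ∈ s, c α • α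

/-- `β` is a non-negative integral linear combination of elements of `B`. -/
def InNatSpan (B : Set (Module.Dual ℝ V)) (β : Module.Dual ℝ V) : Prop :=
  ∃ (s : Finset (Module.Dual ℝ V)) (c : Module.Dual ℝ V → ℕ),
    ↑s ⊆ B ∧ β = ∑ α ∈ s, (c α : ℝ) • α

/-- `β` is an integral linear combination of elements of `B`. -/
def InIntSpan (B : Set (Module.Dual ℝ V)) (β : Module.Dual ℝ V) : Prop :=
  ∃ (s : Finset (Module.Dual ℝ V)) (c : Module.Dual ℝ V → ℤ),
    ↑s ⊆ B ∧ β = ∑ α ∈ s, (c α : ℝ) • α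

/-- The crystallographic property: `R ⊆ ±∑_{α ∈ B^K} ℕ₀ α` for every chamber `K`. -/
def IsCrystallographic (𝒜 : Set (Set V)) (T : Set V) (R : Set (Module.Dual ℝ V)) : Prop :=
  ∀ K ∈ chambersOf 𝒜 T, ∀ β ∈ R,
    InNatSpan (rootBasisOf R K) β ∨ InNatSpan (rootBasisOf R K) (-β)

/-- The chamber complex `𝒮(𝒜,T)`. -/
def chamberComplexOf (𝒜 : Set (Set V)) (T : Set V) : Set (Set V) :=
  {S | ∃ K ∈ chambersOf 𝒜 T, ∃ W : Set (Set V),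
    (∀ H ∈ W, IsWall K H) ∧ S = closure K ∩ ⋂₀ W}

/-- `(𝒜,T)` is `k`-spherical: every simplex of the chamber complex of codimension `k`
meets `T`. -/
def IsKSpherical (𝒜 : Set (Set V)) (T : Set V) (k : ℕ) : Prop :=
  ∀ S ∈ chamberComplexOf 𝒜 T,
    Module.finrank ℝ (Submodule.span ℝ S) = Module.finrank ℝ V - k → (S ∩ T).Nonempty

/-- A reduced root system: `R ∩ ℝα = {±α}` for every `α ∈ R`. -/
def IsReducedRS (R : Set (Module.Dual ℝ V)) : Prop :=
  ∀ α ∈ R, {β ∈ R | ∃ c : ℝ, β = c • α} = {α, -α}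

/-- The hyperplane `H` separates `K` and `K'`. -/
def SeparatesH (H K K' : Set V) : Prop :=
  ∃ α : Module.Dual ℝ V, H = dualKer α ∧ (∀ x ∈ K, 0 < α x) ∧ ∀ x ∈ K', α x < 0

/-- The set `S(K,K')` of hyperplanes of `𝒜` separating `K` and `K'`. -/
def sepSet (𝒜 : Set (Set V)) (K K' : Set V) : Set (Set V) :=
  {H ∈ 𝒜 | SeparatesH H K K'}

/-- The reduction of a set of functionals: the shortest elements on each line. -/
def reducedOf (S : Set (Module.Dual ℝ V)) : Set (Module.Dual ℝ V) :=
  {β ∈ S | ∀ γ ∈ S, ∀ c : ℝ, γ = c • β → 1 ≤ |c|}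

end Arrangements

/-- The standard real vector space `ℝ^r`. -/
abbrev Vr (r : ℕ) : Type := Fin r → ℝ
section CartanGraphs

/-- A generalized Cartan matrix. -/
def IsGCM {I : Type*} (C : Matrix I I ℤ) : Prop :=
  (∀ i, C i i = 2) ∧ (∀ i j, i ≠ j → C i j ≤ 0) ∧
    ∀ i j, i ≠ j → C i j = 0 → C j i = 0

variable {I A : Type*} [Fintype I] [DecidableEq I]

/-- The reflection `σ_i` attached to a generalized Cartan matrix, acting on `ℤ^I`;
on the standard basis it is `σ_i(α_j) = α_j - c_{ij} α_i`. -/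
def gcmSigma (C : Matrix I I ℤ) (i : I) : (I → ℤ) → (I → ℤ) :=
  fun v k => v k - if k = i then ∑ j, C i j * v j else 0

/-- `WeylHom ρ C a b f` : `f` is a morphism from `a` to `b` of the Weyl groupoid of the
Cartan graph `(I, A, ρ, C)`, i.e. a composite of maps `σ_i^c ∈ Hom(c, ρ_i(c))`. -/
inductive WeylHom (ρ : I → A → A) (C : A → Matrix I I ℤ) :
    A → A → ((I → ℤ) → (I → ℤ)) → Prop
  | id (a : A) : WeylHom ρ C a a _root_.id
  | comp {a b : A} {f : (I → ℤ) → (I → ℤ)} (i : I) :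
      WeylHom ρ C a b f → WeylHom ρ C a (ρ i b) (gcmSigma (C b) i ∘ f)

/-- The axioms of a Cartan graph: `A` nonempty, all `C^a` generalized Cartan matrices,
(C1) each `ρ_i` an involution, (C2) `c^a_{ij} = c^{ρ_i(a)}_{ij}`. -/
def IsCartanGraph (ρ : I → A → A) (C : A → Matrix I I ℤ) : Prop :=
  Nonempty A ∧ (∀ a, IsGCM (C a)) ∧ (∀ i, Function.Involutive (ρ i)) ∧
    ∀ a i j, C a i j = C (ρ i a) i j

/-- Connectedness: all Hom-sets of the Weyl groupoid are nonempty. -/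
def CGConnected (ρ : I → A → A) (C : A → Matrix I I ℤ) : Prop :=
  ∀ a b : A, ∃ f, WeylHom ρ C a b f

/-- Simple connectedness: `Hom(a,a) = {id}` for every object `a`. -/
def CGSimplyConnected (ρ : I → A → A) (C : A → Matrix I I ℤ) : Prop :=
  ∀ (a : A) (f : (I → ℤ) → (I → ℤ)), WeylHom ρ C a a f → f = _root_.id

/-- The set of real roots at `a`: all images of standard basis vectors under morphisms
into `a`. -/
def realRootsAt (ρ : I → A → A) (C : A → Matrix I I ℤ) (a : A) : Set (I → ℤ) :=
  {v | ∃ (b : A) (f : (I → ℤ) → (I → ℤ)) (j : I), WeylHom ρ C b a f ∧ v = f (Pi.single j 1)}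

/-- A root system of type `𝒞 = (I, A, ρ, C)`: axioms (R1)-(R4). -/
def IsRootSystemOfType (ρ : I → A → A) (C : A → Matrix I I ℤ)
    (R : A → Set (I → ℤ)) : Prop :=
  (∀ a, R a = {v ∈ R a | ∀ i, 0 ≤ v i} ∪ (fun v => -v) '' {v ∈ R a | ∀ i, 0 ≤ v i}) ∧
  (∀ (a : A) (i : I), {v ∈ R a | ∃ n : ℤ, v = n • Pi.single i 1} =
      {Pi.single i 1, -Pi.single i 1}) ∧
  (∀ (a : A) (i : I), gcmSigma (C a) i '' R a = R (ρ i a)) ∧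
  ∀ (a : A) (i j : I), i ≠ j →
    {v ∈ R a | ∃ m n : ℕ, v = (m : ℤ) • Pi.single i 1 + (n : ℤ) • Pi.single j 1}.Finite →
    (ρ i ∘ ρ j)^[{v ∈ R a |
        ∃ m n : ℕ, v = (m : ℤ) • Pi.single i 1 + (n : ℤ) • Pi.single j 1}.ncard] a = a

end CartanGraphs
section GeometricRealization

variable {r : ℕ} {A : Type*}

/-- The map `ψ : ℤ^r → V*` determined by a basis `(β_i)` of `V*`: `ψ(α_i) = β_i`. -/
def psiMap (bβ : Module.Basis (Fin r) ℝ (Module.Dual ℝ (Vr r))) (v : Fin r → ℤ) :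
    Module.Dual ℝ (Vr r) :=
  ∑ i, (v i : ℝ) • bβ i

/-- The open cone `K^b` attached to the (unique) morphism `u ∈ Hom(b,a)`:
`K^b = ⋂_i ψ_b(α_i)^+` where `ψ_b(α_i) = ψ(u(α_i))`. -/
def Kch (bβ : Module.Basis (Fin r) ℝ (Module.Dual ℝ (Vr r)))
    (u : (Fin r → ℤ) → (Fin r → ℤ)) : Set (Vr r) :=
  {x | ∀ i : Fin r, 0 < psiMap bβ (u (Pi.single i 1)) x}

/-- The root system `R = ψ((R^re)^a)` of the geometric realization. -/
def geoR (ρ : Fin r → A → A) (C : A → Matrix (Fin r) (Fin r) ℤ) (a : A)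
    (bβ : Module.Basis (Fin r) ℝ (Module.Dual ℝ (Vr r))) : Set (Module.Dual ℝ (Vr r)) :=
  psiMap bβ '' realRootsAt ρ C a

/-- The arrangement `𝒜 = {ker α | α ∈ R}` of the geometric realization. -/
def geoA (ρ : Fin r → A → A) (C : A → Matrix (Fin r) (Fin r) ℤ) (a : A)
    (bβ : Module.Basis (Fin r) ℝ (Module.Dual ℝ (Vr r))) : Set (Set (Vr r)) :=
  {H | ∃ α ∈ geoR ρ C a bβ, H = dualKer α}

/-- Adjacency of objects `b, c` of the Cartan graph: the corresponding chambers `K^b`, `K^c`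
are distinct and the span of `cl(K^b) ∩ cl(K^c)` is the wall `ker ψ_b(α_i)` for some `i`. -/
def objAdj (ρ : Fin r → A → A) (C : A → Matrix (Fin r) (Fin r) ℤ) (a : A)
    (bβ : Module.Basis (Fin r) ℝ (Module.Dual ℝ (Vr r))) (b c : A) : Prop :=
  ∃ u u' : (Fin r → ℤ) → (Fin r → ℤ), WeylHom ρ C b a u ∧ WeylHom ρ C c a u' ∧
    ∃ i : Fin r, Kch bβ u ≠ Kch bβ u' ∧
      (Submodule.span ℝ (closure (Kch bβ u) ∩ closure (Kch bβ u')) : Set (Vr r)) =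
        dualKer (psiMap bβ (u (Pi.single i 1)))

/-- The gallery distance between the chambers `K^b` and `K^{b'}`: the minimal length of a
gallery from `K^b` to `K^{b'}`. -/
def galleryDist (ρ : Fin r → A → A) (C : A → Matrix (Fin r) (Fin r) ℤ) (a : A)
    (bβ : Module.Basis (Fin r) ℝ (Module.Dual ℝ (Vr r))) (b b' : A) : ℕ :=
  sInf {m : ℕ | ∃ g : ℕ → A, g 0 = b ∧ g m = b' ∧
    ∀ k < m, objAdj ρ C a bβ (g k) (g (k + 1))}

end GeometricRealization

section ProofA

variable {r : ℕ} {A : Type*}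

theorem gcmSigma_comp {C C' : Matrix (Fin r) (Fin r) ℤ} {i : Fin r}
    (h2 : C i i = 2) (hrow : ∀ j, C i j = C' i j) (v : Fin r → ℤ) :
    gcmSigma C i (gcmSigma C' i v) = v := by
  funext k
  simp only [gcmSigma]
  by_cases hk : k = i
  · subst hk
    have : ∑ j, C k j * (v j - if j = k then ∑ l, C' k l * v l else 0)
        = (∑ j, C k j * v j) - C k k * ∑ l, C' k l * v l := by
      simp only [mul_sub, Finset.sum_sub_distrib, mul_ite, mul_zero]
      congr 1
      rw [Finset.sum_ite_eq' Finset.univ k (fun j => C k j * ∑ l, C' k l * v l)]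
      simp
    simp only [if_true, this, h2]
    have hs : ∑ j, C k j * v j = ∑ l, C' k l * v l := by
      apply Finset.sum_congr rfl; intro j _; rw [hrow j]
    rw [hs]; ring
  · simp [hk]

theorem gcmSigma_add (C : Matrix (Fin r) (Fin r) ℤ) (i : Fin r) (v w : Fin r → ℤ) :
    gcmSigma C i (v + w) = gcmSigma C i v + gcmSigma C i w := by
  funext k
  simp only [gcmSigma, Pi.add_apply, mul_add, Finset.sum_add_distrib]
  split <;> ring

theorem gcmSigma_smul (C : Matrix (Fin r) (Fin r) ℤ) (i : Fin r) (n : ℤ) (v : Fin r → ℤ) :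
    gcmSigma C i (n • v) = n • gcmSigma C i v := by
  funext k
  simp only [gcmSigma, Pi.smul_apply, smul_eq_mul]
  have : ∑ j, C i j * (n * v j) = n * ∑ j, C i j * v j := by
    rw [Finset.mul_sum]; apply Finset.sum_congr rfl; intro j _; ring
  rw [this]; split <;> ring

/-- Every Weyl groupoid morphism is (the function of) a `ℤ`-linear map. -/
theorem WeylHom.linear {ρ : Fin r → A → A} {C : A → Matrix (Fin r) (Fin r) ℤ}
    {b c : A} {f : (Fin r → ℤ) → (Fin r → ℤ)} (h : WeylHom ρ C b c f) :
    (∀ v w, f (v + w) = f v + f w) ∧ (∀ (n : ℤ) v, f (n • v) = n • f v) := by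
  induction h with
  | id => exact ⟨fun _ _ => rfl, fun _ _ => rfl⟩
  | comp i h ih =>
      refine ⟨fun v w => ?_, fun n v => ?_⟩
      · simp only [Function.comp_apply, ih.1, gcmSigma_add]
      · simp only [Function.comp_apply, ih.2, gcmSigma_smul]

/-- Composition of Weyl groupoid morphisms. -/
theorem WeylHom.trans {ρ : Fin r → A → A} {C : A → Matrix (Fin r) (Fin r) ℤ}
    {b c d : A} {f g : (Fin r → ℤ) → (Fin r → ℤ)}
    (hf : WeylHom ρ C b c f) (hg : WeylHom ρ C c d g) : WeylHom ρ C b d (g ∘ f) := by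
  induction hg with
  | id => exact hf
  | comp i h ih => exact ih.comp i

/-- Inverses of Weyl groupoid morphisms. -/
theorem WeylHom.inv {ρ : Fin r → A → A} {C : A → Matrix (Fin r) (Fin r) ℤ}
    (hCG : IsCartanGraph ρ C)
    {b c : A} {f : (Fin r → ℤ) → (Fin r → ℤ)} (h : WeylHom ρ C b c f) :
    ∃ g, WeylHom ρ C c b g ∧ g ∘ f = _root_.id ∧ f ∘ g = _root_.id := by
  induction h with
  | id => exact ⟨_root_.id, WeylHom.id _, rfl, rfl⟩
  | @comp d f i h ih =>
      obtain ⟨g, hg, hgf, hfg⟩ := ih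
      refine ⟨g ∘ gcmSigma (C (ρ i d)) i, ?_, ?_, ?_⟩
      · have h1 : WeylHom ρ C (ρ i d) (ρ i (ρ i d)) (gcmSigma (C (ρ i d)) i ∘ _root_.id) :=
          (WeylHom.id (ρ i d)).comp i
        rw [hCG.2.2.1 i d] at h1
        exact h1.trans hg
      · funext v
        have : gcmSigma (C (ρ i d)) i (gcmSigma (C d) i (f v)) = f v :=
          gcmSigma_comp ((hCG.2.1 (ρ i d)).1 i) (fun j => (hCG.2.2.2 d i j).symm ▸ rfl) (f v)
        show g (gcmSigma (C (ρ i d)) i (gcmSigma (C d) i (f v))) = v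
        rw [this]
        exact congrFun hgf v
      · funext v
        show gcmSigma (C d) i (f (g (gcmSigma (C (ρ i d)) i v))) = v
        have : f (g (gcmSigma (C (ρ i d)) i v)) = gcmSigma (C (ρ i d)) i v :=
          congrFun hfg _
        rw [this]
        exact gcmSigma_comp ((hCG.2.1 d).1 i) (fun j => hCG.2.2.2 d i j) v

/-- In a simply connected Cartan graph, Hom-sets are singletons. -/
theorem WeylHom.unique {ρ : Fin r → A → A} {C : A → Matrix (Fin r) (Fin r) ℤ}
    (hCG : IsCartanGraph ρ C) (hsc : CGSimplyConnected ρ C)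
    {b c : A} {f f' : (Fin r → ℤ) → (Fin r → ℤ)}
    (h : WeylHom ρ C b c f) (h' : WeylHom ρ C b c f') : f = f' := by
  obtain ⟨g, hg, hgf, hfg⟩ := h'.inv hCG
  have hid : g ∘ f = _root_.id := hsc b _ (h.trans hg)
  calc f = (f' ∘ g) ∘ f := by rw [hfg]; rfl
  _ = f' ∘ (g ∘ f) := rfl
  _ = f' := by rw [hid]; rfl

theorem WeylHom.injective {ρ : Fin r → A → A} {C : A → Matrix (Fin r) (Fin r) ℤ}
    (hCG : IsCartanGraph ρ C)
    {b c : A} {f : (Fin r → ℤ) → (Fin r → ℤ)} (h : WeylHom ρ C b c f) :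
    Function.Injective f := by
  obtain ⟨g, _, hgf, _⟩ := h.inv hCG
  exact Function.LeftInverse.injective (g := g) (congrFun hgf)

theorem realRootsAt_map {ρ : Fin r → A → A} {C : A → Matrix (Fin r) (Fin r) ℤ}
    {b c : A} {f : (Fin r → ℤ) → (Fin r → ℤ)} (h : WeylHom ρ C b c f)
    {v : Fin r → ℤ} (hv : v ∈ realRootsAt ρ C b) : f v ∈ realRootsAt ρ C c := by
  obtain ⟨d, g, j, hg, rfl⟩ := hv
  exact ⟨d, f ∘ g, j, hg.trans h, rfl⟩

theorem realRootsAt_single {ρ : Fin r → A → A} {C : A → Matrix (Fin r) (Fin r) ℤ}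
    (c : A) (j : Fin r) : Pi.single j 1 ∈ realRootsAt ρ C c :=
  ⟨c, id, j, WeylHom.id c, rfl⟩

theorem realRootsAt_surj {ρ : Fin r → A → A} {C : A → Matrix (Fin r) (Fin r) ℤ}
    (hCG : IsCartanGraph ρ C)
    {b c : A} {f : (Fin r → ℤ) → (Fin r → ℤ)} (h : WeylHom ρ C b c f)
    {w : Fin r → ℤ} (hw : w ∈ realRootsAt ρ C c) :
    ∃ v ∈ realRootsAt ρ C b, w = f v := by
  obtain ⟨g, hg, _, hfg⟩ := h.inv hCG
  exact ⟨g w, realRootsAt_map hg hw, (congrFun hfg w).symm⟩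

end ProofA

section ProofC
open Module

variable {r : ℕ} {A : Type*}

/-- `psiMap` as a `ℤ`-linear map. -/
theorem psiMap_add (bβ : Module.Basis (Fin r) ℝ (Module.Dual ℝ (Vr r))) (v w : Fin r → ℤ) :
    psiMap bβ (v + w) = psiMap bβ v + psiMap bβ w := by
  simp only [psiMap, Pi.add_apply, Int.cast_add, add_smul, Finset.sum_add_distrib]

theorem psiMap_zsmul (bβ : Module.Basis (Fin r) ℝ (Module.Dual ℝ (Vr r))) (n : ℤ) (v : Fin r → ℤ) :
    psiMap bβ (n • v) = (n : ℝ) • psiMap bβ v := by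
  simp only [psiMap, Pi.smul_apply, smul_eq_mul, Int.cast_mul, Finset.smul_sum, smul_smul]

theorem psiMap_neg (bβ : Module.Basis (Fin r) ℝ (Module.Dual ℝ (Vr r))) (v : Fin r → ℤ) :
    psiMap bβ (-v) = -psiMap bβ v := by
  have h : -v = (-1 : ℤ) • v := by funext k; simp
  rw [h, psiMap_zsmul]
  push_cast
  exact neg_one_smul ℝ (psiMap bβ v)

theorem psiMap_injective (bβ : Module.Basis (Fin r) ℝ (Module.Dual ℝ (Vr r))) :
    Function.Injective (psiMap bβ) := by
  intro v w h
  have h0 : psiMap bβ (v - w) = 0 := by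
    have : v - w = v + (-w) := by ring_nf
    rw [this, psiMap_add, psiMap_neg, h]; simp
  have hlc : ∑ i, ((v - w) i : ℝ) • bβ i = 0 := h0
  have hli := bβ.linearIndependent
  rw [Fintype.linearIndependent_iff] at hli
  have := hli (fun i => ((v - w) i : ℝ)) hlc
  funext i
  have := this i
  have : ((v : Fin r → ℤ) i - w i : ℝ) = 0 := by push_cast at this ⊢; simpa [sub_eq_add_neg] using this
  have : (v i : ℝ) = (w i : ℝ) := by linarith
  exact_mod_cast this

/-- Evaluation formula: `ψ(f α) x = ∑ j α j * ψ(f e_j) x` for linear `f`. -/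
theorem psiMap_linear_eval {ρ : Fin r → A → A} {C : A → Matrix (Fin r) (Fin r) ℤ}
    {b c : A} {f : (Fin r → ℤ) → (Fin r → ℤ)} (hf : WeylHom ρ C b c f)
    (bβ : Module.Basis (Fin r) ℝ (Module.Dual ℝ (Vr r))) (α : Fin r → ℤ) (x : Vr r) :
    psiMap bβ (f α) x = ∑ j, (α j : ℝ) * psiMap bβ (f (Pi.single j 1)) x := by
  obtain ⟨hadd, hsmul⟩ := hf.linear
  let L : (Fin r → ℤ) →ₗ[ℤ] (Fin r → ℤ) :=
    { toFun := f, map_add' := hadd, map_smul' := hsmul }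
  have hα : α = ∑ j, (α j) • Pi.single j (1 : ℤ) := by
    funext k
    rw [Finset.sum_apply]
    simp [Pi.single_apply, Finset.sum_ite_eq']
  have h1 : f α = ∑ j, (α j) • f (Pi.single j 1) := by
    conv_lhs => rw [hα]
    show L (∑ j, (α j) • Pi.single j (1:ℤ)) = _
    rw [map_sum]
    exact Finset.sum_congr rfl fun j _ => L.map_smul (α j) (Pi.single j 1)
  rw [h1]
  have h2 : psiMap bβ (∑ j, (α j) • f (Pi.single j 1))
      = ∑ j, (α j : ℝ) • psiMap bβ (f (Pi.single j 1)) := by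
    induction (Finset.univ : Finset (Fin r)) using Finset.induction_on with
    | empty => simp [psiMap]
    | insert _ _ hni ih =>
        rw [Finset.sum_insert hni, Finset.sum_insert hni, psiMap_add, psiMap_zsmul, ih]
  rw [h2]
  simp [LinearMap.sum_apply, LinearMap.smul_apply, smul_eq_mul]

end ProofC

section ProofC2
open Module

variable {r : ℕ} {A : Type*} {ρ : Fin r → A → A} {C : A → Matrix (Fin r) (Fin r) ℤ}

theorem lin_eval {b c : A} {f : (Fin r → ℤ) → (Fin r → ℤ)} (hf : WeylHom ρ C b c f)
    (α : Fin r → ℤ) (i : Fin r) :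
    (f α) i = ∑ k, α k * (f (Pi.single k 1)) i := by
  obtain ⟨hadd, hsmul⟩ := hf.linear
  let L : (Fin r → ℤ) →ₗ[ℤ] (Fin r → ℤ) :=
    { toFun := f, map_add' := hadd, map_smul' := hsmul }
  have hα : α = ∑ j, (α j) • Pi.single j (1 : ℤ) := by
    funext k
    rw [Finset.sum_apply]
    simp [Pi.single_apply, Finset.sum_ite_eq']
  have h1 : f α = ∑ j, (α j) • f (Pi.single j 1) := by
    conv_lhs => rw [hα]
    show L (∑ j, (α j) • Pi.single j (1:ℤ)) = _
    rw [map_sum]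
    exact Finset.sum_congr rfl fun j _ => L.map_smul (α j) (Pi.single j 1)
  rw [h1, Finset.sum_apply]
  exact Finset.sum_congr rfl fun j _ => rfl

/-- Existence of the basis of simple roots (as functionals) attached to a morphism. -/
theorem exists_chBasis (hCG : IsCartanGraph ρ C) {c d : A}
    {u : (Fin r → ℤ) → (Fin r → ℤ)} (hu : WeylHom ρ C c d u)
    (bβ : Module.Basis (Fin r) ℝ (Module.Dual ℝ (Vr r))) :
    ∃ bc : Module.Basis (Fin r) ℝ (Module.Dual ℝ (Vr r)),
      ∀ i, bc i = psiMap bβ (u (Pi.single i 1)) := by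
  obtain ⟨g, hg, hgu, hug⟩ := hu.inv hCG
  set M : Matrix (Fin r) (Fin r) ℝ := fun i k => ((u (Pi.single k 1)) i : ℝ) with hM
  set N : Matrix (Fin r) (Fin r) ℝ := fun i k => ((g (Pi.single k 1)) i : ℝ) with hN
  have hMN : M * N = 1 := by
    ext i l
    have hz : (u (g (Pi.single l 1))) i = (Pi.single l 1 : Fin r → ℤ) i :=
      congrFun (congrFun hug (Pi.single l 1)) i
    rw [lin_eval hu (g (Pi.single l 1)) i] at hz
    have hzr : ∑ k, ((g (Pi.single l 1)) k : ℝ) * ((u (Pi.single k 1)) i : ℝ)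
        = ((Pi.single l 1 : Fin r → ℤ) i : ℝ) := by exact_mod_cast hz
    rw [Matrix.mul_apply, Matrix.one_apply]
    calc ∑ j, M i j * N j l
        = ∑ k, ((g (Pi.single l 1)) k : ℝ) * ((u (Pi.single k 1)) i : ℝ) :=
          Finset.sum_congr rfl fun k _ => by simp only [hM, hN]; ring
      _ = ((Pi.single l 1 : Fin r → ℤ) i : ℝ) := hzr
      _ = if i = l then 1 else 0 := by by_cases h : i = l <;> simp [Pi.single_apply, h]
  have hNM : N * M = 1 := by
    ext i l
    have hz : (g (u (Pi.single l 1))) i = (Pi.single l 1 : Fin r → ℤ) i :=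
      congrFun (congrFun hgu (Pi.single l 1)) i
    rw [lin_eval hg (u (Pi.single l 1)) i] at hz
    have hzr : ∑ k, ((u (Pi.single l 1)) k : ℝ) * ((g (Pi.single k 1)) i : ℝ)
        = ((Pi.single l 1 : Fin r → ℤ) i : ℝ) := by exact_mod_cast hz
    rw [Matrix.mul_apply, Matrix.one_apply]
    calc ∑ j, N i j * M j l
        = ∑ k, ((u (Pi.single l 1)) k : ℝ) * ((g (Pi.single k 1)) i : ℝ) :=
          Finset.sum_congr rfl fun k _ => by simp only [hM, hN]; ring
      _ = ((Pi.single l 1 : Fin r → ℤ) i : ℝ) := hzr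
      _ = if i = l then 1 else 0 := by by_cases h : i = l <;> simp [Pi.single_apply, h]
  let E : (Fin r → ℝ) ≃ₗ[ℝ] (Fin r → ℝ) :=
    LinearEquiv.ofLinear M.mulVecLin N.mulVecLin
      (by rw [← Matrix.mulVecLin_mul, hMN, Matrix.mulVecLin_one])
      (by rw [← Matrix.mulVecLin_mul, hNM, Matrix.mulVecLin_one])
  refine ⟨(Pi.basisFun ℝ (Fin r)).map (E.trans bβ.equivFun.symm), fun i => ?_⟩
  rw [Basis.map_apply, Pi.basisFun_apply]
  show bβ.equivFun.symm (E (Pi.single i 1)) = _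
  have hE : E (Pi.single i 1) = fun j => M j i := by
    show M.mulVec (Pi.single i 1) = _
    funext j
    rw [Matrix.mulVec_single]
    exact mul_one _
  rw [hE, Basis.equivFun_symm_apply]
  rfl

/-- Key evaluation point existence: hit arbitrary coordinates w.r.t. a dual basis. -/
theorem exists_eval_pt (bc : Module.Basis (Fin r) ℝ (Module.Dual ℝ (Vr r))) (w : Fin r → ℝ) :
    ∃ x : Vr r, ∀ i, bc i x = w i := by
  let ev : Vr r →ₗ[ℝ] (Fin r → ℝ) := LinearMap.pi (fun i => bc i)
  have hinj : Function.Injective ev := by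
    rw [← LinearMap.ker_eq_bot, LinearMap.ker_eq_bot']
    intro x hx
    have hx' : ∀ i, bc i x = 0 := fun i => congrFun hx i
    have hall : ∀ φ : Module.Dual ℝ (Vr r), φ x = 0 := by
      intro φ
      have hrepr : φ = ∑ i, bc.repr φ i • bc i := (bc.sum_repr φ).symm
      rw [hrepr, LinearMap.sum_apply]
      exact Finset.sum_eq_zero fun i _ => by rw [LinearMap.smul_apply, hx', smul_zero]
    funext k
    exact hall (LinearMap.proj k)
  have hsurj : Function.Surjective ev := (LinearMap.injective_iff_surjective).mp hinj
  obtain ⟨x, hx⟩ := hsurj w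
  exact ⟨x, fun i => congrFun hx i⟩

/-- Closure of an open polyhedral cone with nonempty interior given by functionals. -/
theorem closure_cone (φ : Fin r → Module.Dual ℝ (Vr r)) (p : Vr r) (hp : ∀ i, 0 < φ i p) :
    closure {x : Vr r | ∀ i, 0 < φ i x} = {x : Vr r | ∀ i, 0 ≤ φ i x} := by
  apply subset_antisymm
  · apply closure_minimal
    · exact fun x hx i => le_of_lt (hx i)
    · have : {x : Vr r | ∀ i, 0 ≤ φ i x} = ⋂ i, (φ i) ⁻¹' Set.Ici 0 := by
        ext x; simp [Set.mem_iInter]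
      rw [this]
      exact isClosed_iInter fun i =>
        (IsClosed.preimage (φ i).continuous_of_finiteDimensional isClosed_Ici)
  · intro q hq
    have htend : Filter.Tendsto (fun n : ℕ => q + (1 / (n + 1) : ℝ) • p)
        Filter.atTop (nhds q) := by
      have h0 : Filter.Tendsto (fun n : ℕ => (1 / (n + 1) : ℝ)) Filter.atTop (nhds 0) :=
        tendsto_one_div_add_atTop_nhds_zero_nat
      have := Filter.Tendsto.add (tendsto_const_nhds (x := q))
        (Filter.Tendsto.smul_const h0 p)
      simpa using this
    refine mem_closure_of_tendsto htend (Filter.Eventually.of_forall fun n => ?_)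
    intro i
    have h1 : (0:ℝ) < 1 / (n + 1 : ℝ) := by positivity
    have hge := hq i
    have h2 : φ i (q + (1 / (n + 1) : ℝ) • p) = φ i q + (1 / (n + 1) : ℝ) * φ i p := by
      rw [map_add, map_smul]; rfl
    rw [h2]
    have h3 : 0 < (1 / (n + 1) : ℝ) * φ i p := mul_pos h1 (hp i)
    linarith

end ProofC2

section ProofB
variable {r : ℕ} {A : Type*} {ρ : Fin r → A → A} {C : A → Matrix (Fin r) (Fin r) ℤ}

theorem root_ne_zero (hCG : IsCartanGraph ρ C) {c : A} {v : Fin r → ℤ}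
    (hv : v ∈ realRootsAt ρ C c) : v ≠ 0 := by
  obtain ⟨d, f, j, hf, rfl⟩ := hv
  intro h
  have hinj := hf.injective hCG
  have h0 : f 0 = 0 := by
    have := hf.linear.2 0 0
    simpa using this
  have h1 : Pi.single j (1:ℤ) = 0 := hinj (h.trans h0.symm)
  have := congrFun h1 j
  simp [Pi.single_apply] at this

theorem root_sign (hRS : IsRootSystemOfType ρ C (realRootsAt ρ C)) {c : A} {v : Fin r → ℤ}
    (hv : v ∈ realRootsAt ρ C c) : (∀ j, 0 ≤ v j) ∨ (∀ j, v j ≤ 0) := by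
  have h1 := hRS.1 c
  rw [h1] at hv
  rcases hv with h | ⟨w, hw, rfl⟩
  · exact Or.inl h.2
  · exact Or.inr fun j => by simpa using hw.2 j

theorem root_single (hRS : IsRootSystemOfType ρ C (realRootsAt ρ C)) {c : A} {v : Fin r → ℤ}
    {i : Fin r} (hv : v ∈ realRootsAt ρ C c) (h : ∃ n : ℤ, v = n • Pi.single i 1) :
    v = Pi.single i 1 ∨ v = -Pi.single i 1 := by
  have h2 := hRS.2.1 c i
  have hm : v ∈ {v ∈ realRootsAt ρ C c | ∃ n : ℤ, v = n • Pi.single i 1} := ⟨hv, h⟩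
  rw [h2] at hm
  rcases hm with hm | hm
  · exact Or.inl hm
  · exact Or.inr hm

theorem weylHom_sigma (c : A) (i : Fin r) : WeylHom ρ C c (ρ i c) (gcmSigma (C c) i) := by
  have := (WeylHom.id (ρ := ρ) (C := C) c).comp i
  rwa [Function.comp_id] at this

theorem gcmSigma_inv1 (hCG : IsCartanGraph ρ C) (c : A) (i : Fin r) (v : Fin r → ℤ) :
    gcmSigma (C c) i (gcmSigma (C (ρ i c)) i v) = v :=
  gcmSigma_comp ((hCG.2.1 c).1 i) (fun j => hCG.2.2.2 c i j) v

theorem gcmSigma_inv2 (hCG : IsCartanGraph ρ C) (c : A) (i : Fin r) (v : Fin r → ℤ) :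
    gcmSigma (C (ρ i c)) i (gcmSigma (C c) i v) = v :=
  gcmSigma_comp ((hCG.2.1 (ρ i c)).1 i) (fun j => (hCG.2.2.2 c i j).symm) v

theorem gcmSigma_single (M : Matrix (Fin r) (Fin r) ℤ) (i j : Fin r) :
    gcmSigma M i (Pi.single j 1) = Pi.single j 1 - M i j • Pi.single i 1 := by
  funext k
  have hs : ∑ l, M i l * (Pi.single j 1 : Fin r → ℤ) l = M i j := by
    simp [Pi.single_apply, mul_ite, Finset.sum_ite_eq']
  simp only [gcmSigma, hs, Pi.sub_apply, Pi.smul_apply, Pi.single_apply, smul_eq_mul]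
  by_cases hk : k = i <;> simp [hk]

theorem gcmSigma_single_self (M : Matrix (Fin r) (Fin r) ℤ) (i : Fin r) (h2 : M i i = 2) :
    gcmSigma M i (Pi.single i 1) = -Pi.single i 1 := by
  rw [gcmSigma_single, h2]
  funext k
  by_cases hk : k = i <;> simp [hk, Pi.single_apply]

/-- Permutation lemma: `σ_i` maps positive roots other than `α_i` to positive roots. -/
theorem sigma_pos (hCG : IsCartanGraph ρ C) (hRS : IsRootSystemOfType ρ C (realRootsAt ρ C))
    {c : A} {i : Fin r} {v : Fin r → ℤ}
    (hv : v ∈ realRootsAt ρ C c) (hpos : ∀ j, 0 ≤ v j) (hne : v ≠ Pi.single i 1) :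
    ∀ j, 0 ≤ gcmSigma (C c) i v j := by
  have hs : gcmSigma (C c) i v ∈ realRootsAt ρ C (ρ i c) :=
    realRootsAt_map (weylHom_sigma c i) hv
  rcases root_sign hRS hs with h | h
  · exact h
  · exfalso
    have hj0 : ∀ j, j ≠ i → v j = 0 := by
      intro j hj
      have hle := h j
      simp only [gcmSigma, if_neg hj] at hle
      have h1 : v j - 0 ≤ 0 := by simpa using hle
      have h2 := hpos j
      omega
    have hsingle : v = (v i) • Pi.single i 1 := by
      funext k
      by_cases hk : k = i
      · subst hk; simp [Pi.single_apply]
      · simp [Pi.single_apply, hk, hj0 k hk]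
    rcases root_single hRS hv ⟨v i, hsingle⟩ with h1 | h1
    · exact hne h1
    · have hvi : v i = -1 := by
        have := congrFun h1 i
        simpa [Pi.single_apply] using this
      have := hpos i
      omega

/-- Finiteness of inversion sets. -/
theorem inv_finite (hCG : IsCartanGraph ρ C) (hRS : IsRootSystemOfType ρ C (realRootsAt ρ C))
    {c c' : A} {w : (Fin r → ℤ) → (Fin r → ℤ)} (h : WeylHom ρ C c c' w) :
    {α ∈ realRootsAt ρ C c | (∀ j, 0 ≤ α j) ∧ (∀ j, w α j ≤ 0)}.Finite := by
  induction h with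
  | id =>
      have : {α ∈ realRootsAt ρ C c | (∀ j, 0 ≤ α j) ∧ (∀ j, (_root_.id α : Fin r → ℤ) j ≤ 0)}
          = ∅ := by
        ext α
        simp only [Set.mem_setOf_eq, Set.mem_empty_iff_false, iff_false, not_and]
        intro hα hpos hneg
        exact root_ne_zero hCG hα (funext fun j => le_antisymm (hneg j) (hpos j))
      rw [this]; exact Set.finite_empty
  | @comp d f i hf ih =>
      have hsub : {α ∈ realRootsAt ρ C c | (∀ j, 0 ≤ α j) ∧
            (∀ j, (gcmSigma (C d) i ∘ f) α j ≤ 0)}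
          ⊆ {α ∈ realRootsAt ρ C c | (∀ j, 0 ≤ α j) ∧ (∀ j, f α j ≤ 0)}
            ∪ {α | f α = Pi.single i 1} := by
        rintro α ⟨hαR, hαpos, hαneg⟩
        have hfα : f α ∈ realRootsAt ρ C d := realRootsAt_map hf hαR
        rcases root_sign hRS hfα with hp | hn
        · right
          by_contra hne
          have hgood := sigma_pos hCG hRS hfα hp hne
          have hz : gcmSigma (C d) i (f α) = 0 :=
            funext fun j => le_antisymm (hαneg j) (hgood j)
          exact root_ne_zero hCG (realRootsAt_map (weylHom_sigma d i) hfα) hz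
        · exact Or.inl ⟨hαR, hαpos, hn⟩
      apply Set.Finite.subset (ih.union ?_) hsub
      have : {α : Fin r → ℤ | f α = Pi.single i 1}.Subsingleton := by
        intro x hx y hy
        exact hf.injective hCG (hx.trans hy.symm)
      exact this.finite

end ProofB

section ProofD
open Module

variable {r : ℕ} {A : Type*} {ρ : Fin r → A → A} {C : A → Matrix (Fin r) (Fin r) ℤ}

/-- The canonical morphism from `c` to the base object `a`. -/
noncomputable def uo (hconn : CGConnected ρ C) (a c : A) : (Fin r → ℤ) → (Fin r → ℤ) :=
  (hconn c a).choose

theorem huo (hconn : CGConnected ρ C) (a c : A) : WeylHom ρ C c a (uo hconn a c) :=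
  (hconn c a).choose_spec

/-- The chamber of an object. -/
noncomputable def KcS (hconn : CGConnected ρ C) (a : A)
    (bβ : Module.Basis (Fin r) ℝ (Module.Dual ℝ (Vr r))) (c : A) : Set (Vr r) :=
  Kch bβ (uo hconn a c)

/-- The simple roots (as functionals) of an object. -/
noncomputable def gmaF (hconn : CGConnected ρ C) (a : A)
    (bβ : Module.Basis (Fin r) ℝ (Module.Dual ℝ (Vr r))) (c : A) (i : Fin r) :
    Module.Dual ℝ (Vr r) :=
  psiMap bβ (uo hconn a c (Pi.single i 1))

/-- `γ` is positive on the chamber of `c`. -/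
noncomputable def PosOnP (hconn : CGConnected ρ C) (a : A)
    (bβ : Module.Basis (Fin r) ℝ (Module.Dual ℝ (Vr r))) (γ : Module.Dual ℝ (Vr r)) (c : A) : Prop :=
  ∀ v ∈ KcS hconn a bβ c, 0 < γ v

/-- The set of roots separating the chambers of `c` and `c'`. -/
noncomputable def SepS (hconn : CGConnected ρ C) (a : A)
    (bβ : Module.Basis (Fin r) ℝ (Module.Dual ℝ (Vr r))) (c c' : A) : Set (Module.Dual ℝ (Vr r)) :=
  {γ ∈ geoR ρ C a bβ | PosOnP hconn a bβ γ c ∧ PosOnP hconn a bβ (-γ) c'}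

theorem mem_KcS_iff (hconn : CGConnected ρ C) (a : A)
    (bβ : Module.Basis (Fin r) ℝ (Module.Dual ℝ (Vr r))) (c : A) (x : Vr r) :
    x ∈ KcS hconn a bβ c ↔ ∀ i, 0 < gmaF hconn a bβ c i x := Iff.rfl

theorem uo_unique (hCG : IsCartanGraph ρ C) (hconn : CGConnected ρ C)
    (hsc : CGSimplyConnected ρ C) (a : A) {c : A} {u : (Fin r → ℤ) → (Fin r → ℤ)}
    (hu : WeylHom ρ C c a u) : u = uo hconn a c :=
  WeylHom.unique hCG hsc hu (huo hconn a c)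

theorem uo_rho (hCG : IsCartanGraph ρ C) (hconn : CGConnected ρ C)
    (hsc : CGSimplyConnected ρ C) (a : A) (c : A) (i : Fin r) :
    uo hconn a (ρ i c) = uo hconn a c ∘ gcmSigma (C (ρ i c)) i := by
  have h1 : WeylHom ρ C (ρ i c) (ρ i (ρ i c)) (gcmSigma (C (ρ i c)) i) :=
    weylHom_sigma (ρ i c) i
  rw [(hCG.2.2.1 i) c] at h1
  exact (uo_unique hCG hconn hsc a (h1.trans (huo hconn a c))).symm

theorem exists_chBasis_obj (hCG : IsCartanGraph ρ C) (hconn : CGConnected ρ C) (a : A)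
    (bβ : Module.Basis (Fin r) ℝ (Module.Dual ℝ (Vr r))) (c : A) :
    ∃ bc : Module.Basis (Fin r) ℝ (Module.Dual ℝ (Vr r)), ∀ i, bc i = gmaF hconn a bβ c i :=
  exists_chBasis hCG (huo hconn a c) bβ

theorem KcS_pt (hCG : IsCartanGraph ρ C) (hconn : CGConnected ρ C) (a : A)
    (bβ : Module.Basis (Fin r) ℝ (Module.Dual ℝ (Vr r))) (c : A) (w : Fin r → ℝ) :
    ∃ x : Vr r, ∀ i, gmaF hconn a bβ c i x = w i := by
  obtain ⟨bc, hbc⟩ := exists_chBasis_obj hCG hconn a bβ c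
  obtain ⟨x, hx⟩ := exists_eval_pt bc w
  exact ⟨x, fun i => by rw [← hbc i]; exact hx i⟩

theorem KcS_nonempty (hCG : IsCartanGraph ρ C) (hconn : CGConnected ρ C) (a : A)
    (bβ : Module.Basis (Fin r) ℝ (Module.Dual ℝ (Vr r))) (c : A) :
    ∃ p, p ∈ KcS hconn a bβ c := by
  obtain ⟨x, hx⟩ := KcS_pt hCG hconn a bβ c (fun _ => 1)
  refine ⟨x, fun i => ?_⟩
  have h := hx i
  rw [gmaF] at h
  rw [h]
  norm_num

theorem closure_KcS (hCG : IsCartanGraph ρ C) (hconn : CGConnected ρ C) (a : A)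
    (bβ : Module.Basis (Fin r) ℝ (Module.Dual ℝ (Vr r))) (c : A) :
    closure (KcS hconn a bβ c) = {x : Vr r | ∀ i, 0 ≤ gmaF hconn a bβ c i x} := by
  obtain ⟨p, hp⟩ := KcS_nonempty hCG hconn a bβ c
  exact closure_cone (gmaF hconn a bβ c) p hp

theorem mem_geoR_iff (hCG : IsCartanGraph ρ C) (hconn : CGConnected ρ C) (a : A)
    (bβ : Module.Basis (Fin r) ℝ (Module.Dual ℝ (Vr r))) (c : A) (γ : Module.Dual ℝ (Vr r)) :
    γ ∈ geoR ρ C a bβ ↔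
      ∃ α ∈ realRootsAt ρ C c, γ = psiMap bβ (uo hconn a c α) := by
  constructor
  · rintro ⟨v, hv, rfl⟩
    obtain ⟨α, hα, hvα⟩ := realRootsAt_surj hCG (huo hconn a c) hv
    exact ⟨α, hα, by rw [hvα]⟩
  · rintro ⟨α, hα, rfl⟩
    exact ⟨uo hconn a c α, realRootsAt_map (huo hconn a c) hα, rfl⟩

theorem eval_obj (hconn : CGConnected ρ C) (a : A)
    (bβ : Module.Basis (Fin r) ℝ (Module.Dual ℝ (Vr r))) (c : A) (α : Fin r → ℤ) (x : Vr r) :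
    psiMap bβ (uo hconn a c α) x = ∑ j, (α j : ℝ) * gmaF hconn a bβ c j x :=
  psiMap_linear_eval (huo hconn a c) bβ α x

theorem psi_uo_injective (hCG : IsCartanGraph ρ C) (hconn : CGConnected ρ C) (a : A)
    (bβ : Module.Basis (Fin r) ℝ (Module.Dual ℝ (Vr r))) (c : A) {α β : Fin r → ℤ}
    (h : psiMap bβ (uo hconn a c α) = psiMap bβ (uo hconn a c β)) : α = β :=
  (huo hconn a c).injective hCG (psiMap_injective bβ h)

/-- A nonneg nonzero root is positive on the chamber. -/
theorem posOn_of_posroot (hCG : IsCartanGraph ρ C) (hconn : CGConnected ρ C) (a : A)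
    (bβ : Module.Basis (Fin r) ℝ (Module.Dual ℝ (Vr r))) (c : A) {α : Fin r → ℤ}
    (hα : α ∈ realRootsAt ρ C c) (hpos : ∀ j, 0 ≤ α j) :
    PosOnP hconn a bβ (psiMap bβ (uo hconn a c α)) c := by
  intro x hx
  rw [eval_obj hconn a bβ c α x]
  have hne := root_ne_zero hCG hα
  have hj : ∃ j, α j ≠ 0 := by
    by_contra h
    push_neg at h
    exact hne (funext h)
  obtain ⟨j, hj⟩ := hj
  apply Finset.sum_pos'
  · intro k _
    exact mul_nonneg (by exact_mod_cast hpos k) (le_of_lt (hx k))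
  · refine ⟨j, Finset.mem_univ j, ?_⟩
    have h1 : (0:ℝ) < (α j : ℝ) := by
      have := hpos j
      have : 0 < α j := lt_of_le_of_ne this (Ne.symm hj)
      exact_mod_cast this
    exact mul_pos h1 (hx j)

theorem nonneg_of_posroot_closure (hCG : IsCartanGraph ρ C) (hconn : CGConnected ρ C) (a : A)
    (bβ : Module.Basis (Fin r) ℝ (Module.Dual ℝ (Vr r))) (c : A) {α : Fin r → ℤ}
    (hpos : ∀ j, 0 ≤ α j) {x : Vr r} (hx : x ∈ closure (KcS hconn a bβ c)) :
    0 ≤ psiMap bβ (uo hconn a c α) x := by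
  rw [closure_KcS hCG hconn a bβ c] at hx
  rw [eval_obj hconn a bβ c α x]
  apply Finset.sum_nonneg
  intro k _
  exact mul_nonneg (by exact_mod_cast hpos k) (hx k)

theorem root_neg (hRS : IsRootSystemOfType ρ C (realRootsAt ρ C)) {c : A} {v : Fin r → ℤ}
    (hv : v ∈ realRootsAt ρ C c) : -v ∈ realRootsAt ρ C c := by
  have h1 := hRS.1 c
  rw [h1] at hv ⊢
  rcases hv with h | h
  · exact Or.inr ⟨v, h, rfl⟩
  · obtain ⟨w, hw, hwv⟩ := h
    have hveq : -v = w := by rw [← hwv]; funext k; simp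
    rw [hveq]
    exact Or.inl hw

theorem uo_neg (hconn : CGConnected ρ C) (a : A) (c : A) (α : Fin r → ℤ) :
    uo hconn a c (-α) = -(uo hconn a c α) := by
  have hl := (huo hconn a c).linear
  have h1 : (-α) = (-1 : ℤ) • α := by funext k; simp
  have h2 := hl.2 (-1) α
  rw [h1, h2]
  funext k; simp

theorem geoR_neg (hCG : IsCartanGraph ρ C) (hconn : CGConnected ρ C)
    (hRS : IsRootSystemOfType ρ C (realRootsAt ρ C)) (a : A)
    (bβ : Module.Basis (Fin r) ℝ (Module.Dual ℝ (Vr r))) {γ : Module.Dual ℝ (Vr r)}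
    (hγ : γ ∈ geoR ρ C a bβ) : -γ ∈ geoR ρ C a bβ := by
  obtain ⟨v, hv, rfl⟩ := hγ
  exact ⟨-v, root_neg hRS hv, psiMap_neg bβ v⟩

/-- Positivity dichotomy for roots on a chamber. -/
theorem posOn_dichotomy (hCG : IsCartanGraph ρ C) (hconn : CGConnected ρ C)
    (hRS : IsRootSystemOfType ρ C (realRootsAt ρ C)) (a : A)
    (bβ : Module.Basis (Fin r) ℝ (Module.Dual ℝ (Vr r))) (c : A) {γ : Module.Dual ℝ (Vr r)}
    (hγ : γ ∈ geoR ρ C a bβ) :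
    PosOnP hconn a bβ γ c ∨ PosOnP hconn a bβ (-γ) c := by
  obtain ⟨α, hα, rfl⟩ := (mem_geoR_iff hCG hconn a bβ c γ).mp hγ
  rcases root_sign hRS hα with h | h
  · exact Or.inl (posOn_of_posroot hCG hconn a bβ c hα h)
  · right
    have h1 : -psiMap bβ (uo hconn a c α) = psiMap bβ (uo hconn a c (-α)) := by
      rw [uo_neg, psiMap_neg]
    rw [h1]
    exact posOn_of_posroot hCG hconn a bβ c (root_neg hRS hα) (fun j => by
      have := h j; simp; omega)

theorem posOn_not_both (hCG : IsCartanGraph ρ C) (hconn : CGConnected ρ C) (a : A)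
    (bβ : Module.Basis (Fin r) ℝ (Module.Dual ℝ (Vr r))) (c : A) {γ : Module.Dual ℝ (Vr r)}
    (h1 : PosOnP hconn a bβ γ c) (h2 : PosOnP hconn a bβ (-γ) c) : False := by
  obtain ⟨p, hp⟩ := KcS_nonempty hCG hconn a bβ c
  have := h1 p hp
  have h3 := h2 p hp
  simp only [LinearMap.neg_apply] at h3
  linarith

theorem posOn_iff_pt (hCG : IsCartanGraph ρ C) (hconn : CGConnected ρ C)
    (hRS : IsRootSystemOfType ρ C (realRootsAt ρ C)) (a : A)
    (bβ : Module.Basis (Fin r) ℝ (Module.Dual ℝ (Vr r))) (c : A) {γ : Module.Dual ℝ (Vr r)}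
    (hγ : γ ∈ geoR ρ C a bβ) {x : Vr r} (hx : x ∈ KcS hconn a bβ c) :
    PosOnP hconn a bβ γ c ↔ 0 < γ x := by
  constructor
  · exact fun h => h x hx
  · intro h
    rcases posOn_dichotomy hCG hconn hRS a bβ c hγ with h1 | h1
    · exact h1
    · exfalso
      have := h1 x hx
      simp only [LinearMap.neg_apply] at this
      linarith

theorem gmaF_mem_geoR (hconn : CGConnected ρ C) (a : A)
    (bβ : Module.Basis (Fin r) ℝ (Module.Dual ℝ (Vr r))) (c : A) (i : Fin r) :
    gmaF hconn a bβ c i ∈ geoR ρ C a bβ :=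
  ⟨uo hconn a c (Pi.single i 1),
    realRootsAt_map (huo hconn a c) (realRootsAt_single c i), rfl⟩

theorem posOn_gmaF (hCG : IsCartanGraph ρ C) (hconn : CGConnected ρ C) (a : A)
    (bβ : Module.Basis (Fin r) ℝ (Module.Dual ℝ (Vr r))) (c : A) (i : Fin r) :
    PosOnP hconn a bβ (gmaF hconn a bβ c i) c := by
  intro x hx
  exact hx i

end ProofD

section ProofD2
open Module

variable {r : ℕ} {A : Type*} {ρ : Fin r → A → A} {C : A → Matrix (Fin r) (Fin r) ℤ}

theorem weylHom_sigma' (hCG : IsCartanGraph ρ C) (c : A) (i : Fin r) :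
    WeylHom ρ C (ρ i c) c (gcmSigma (C (ρ i c)) i) := by
  have h := weylHom_sigma (ρ := ρ) (C := C) (ρ i c) i
  rwa [(hCG.2.2.1 i) c] at h

theorem uo_comp_sigma (hCG : IsCartanGraph ρ C) (hconn : CGConnected ρ C)
    (hsc : CGSimplyConnected ρ C) (a : A) (c : A) (i : Fin r) (v : Fin r → ℤ) :
    uo hconn a (ρ i c) v = uo hconn a c (gcmSigma (C (ρ i c)) i v) :=
  congrFun (uo_rho hCG hconn hsc a c i) v

theorem uo_sub_zsmul (hconn : CGConnected ρ C) (a : A) (c : A) (v w : Fin r → ℤ) (n : ℤ) :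
    uo hconn a c (v - n • w) = uo hconn a c v - n • uo hconn a c w := by
  have hl := (huo hconn a c).linear
  have h1 : v - n • w = v + (-n) • w := by funext k; simp; ring
  rw [h1, hl.1, hl.2]
  funext k; simp; ring

theorem psiMap_sub (bβ : Module.Basis (Fin r) ℝ (Module.Dual ℝ (Vr r))) (v w : Fin r → ℤ) :
    psiMap bβ (v - w) = psiMap bβ v - psiMap bβ w := by
  have h1 : v - w = v + -w := by funext k; simp; ring
  rw [h1, psiMap_add, psiMap_neg]
  abel

theorem gmaF_rho (hCG : IsCartanGraph ρ C) (hconn : CGConnected ρ C)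
    (hsc : CGSimplyConnected ρ C) (a : A) (bβ : Module.Basis (Fin r) ℝ (Module.Dual ℝ (Vr r)))
    (c : A) (i j : Fin r) :
    gmaF hconn a bβ (ρ i c) j
      = gmaF hconn a bβ c j - ((C c i j : ℝ)) • gmaF hconn a bβ c i := by
  have h1 : gmaF hconn a bβ (ρ i c) j
      = psiMap bβ (uo hconn a c (gcmSigma (C (ρ i c)) i (Pi.single j 1))) := by
    rw [gmaF, uo_comp_sigma hCG hconn hsc a c i]
  rw [h1, gcmSigma_single, uo_sub_zsmul, psiMap_sub]
  have h2 : C (ρ i c) i j = C c i j := (hCG.2.2.2 c i j).symm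
  have h3 : psiMap bβ ((C (ρ i c) i j) • uo hconn a c (Pi.single i 1))
      = (C c i j : ℝ) • psiMap bβ (uo hconn a c (Pi.single i 1)) := by
    rw [psiMap_zsmul, h2]
  rw [h3]
  rfl

theorem gmaF_rho_self (hCG : IsCartanGraph ρ C) (hconn : CGConnected ρ C)
    (hsc : CGSimplyConnected ρ C) (a : A) (bβ : Module.Basis (Fin r) ℝ (Module.Dual ℝ (Vr r)))
    (c : A) (i : Fin r) :
    gmaF hconn a bβ (ρ i c) i = -gmaF hconn a bβ c i := by
  rw [gmaF_rho hCG hconn hsc a bβ c i i, (hCG.2.1 c).1 i]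
  push_cast
  set γ := gmaF hconn a bβ c i
  have : (2 : ℝ) • γ = γ + γ := two_smul ℝ γ
  rw [this]
  abel

theorem posOn_repr (hCG : IsCartanGraph ρ C) (hconn : CGConnected ρ C)
    (hRS : IsRootSystemOfType ρ C (realRootsAt ρ C)) (a : A)
    (bβ : Module.Basis (Fin r) ℝ (Module.Dual ℝ (Vr r))) (c : A) {γ : Module.Dual ℝ (Vr r)}
    (hγ : γ ∈ geoR ρ C a bβ) (h : PosOnP hconn a bβ γ c) :
    ∃ α ∈ realRootsAt ρ C c, (∀ j, 0 ≤ α j) ∧ γ = psiMap bβ (uo hconn a c α) := by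
  obtain ⟨α, hα, rfl⟩ := (mem_geoR_iff hCG hconn a bβ c γ).mp hγ
  rcases root_sign hRS hα with hp | hn
  · exact ⟨α, hα, hp, rfl⟩
  · exfalso
    obtain ⟨p, hp⟩ := KcS_nonempty hCG hconn a bβ c
    have h1 := h p hp
    have h2 : PosOnP hconn a bβ (psiMap bβ (uo hconn a c (-α))) c :=
      posOn_of_posroot hCG hconn a bβ c (root_neg hRS hα) (fun j => by
        have := hn j; simp; omega)
    have h3 := h2 p hp
    rw [uo_neg, psiMap_neg] at h3
    simp only [LinearMap.neg_apply] at h3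
    linarith

/-- The sign-flip lemma: positivity on the chamber of `ρ i c` vs that of `c`. -/
theorem posOn_rho_iff (hCG : IsCartanGraph ρ C) (hconn : CGConnected ρ C)
    (hsc : CGSimplyConnected ρ C) (hRS : IsRootSystemOfType ρ C (realRootsAt ρ C)) (a : A)
    (bβ : Module.Basis (Fin r) ℝ (Module.Dual ℝ (Vr r))) (c : A) (i : Fin r)
    {γ : Module.Dual ℝ (Vr r)} (hγ : γ ∈ geoR ρ C a bβ) :
    PosOnP hconn a bβ γ (ρ i c) ↔
      (PosOnP hconn a bβ γ c ∧ γ ≠ gmaF hconn a bβ c i) ∨ γ = -gmaF hconn a bβ c i := by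
  constructor
  · intro h
    obtain ⟨α, hαR, hαpos, rfl⟩ := posOn_repr hCG hconn hRS a bβ (ρ i c) hγ h
    by_cases hα : α = Pi.single i 1
    · right
      rw [hα]
      rw [← gmaF, gmaF_rho_self hCG hconn hsc a bβ c i]
    · left
      set β := gcmSigma (C (ρ i c)) i α with hβ
      have hβR : β ∈ realRootsAt ρ C c := realRootsAt_map (weylHom_sigma' hCG c i) hαR
      have hβpos : ∀ j, 0 ≤ β j := sigma_pos hCG hRS hαR hαpos hα
      have heq : psiMap bβ (uo hconn a (ρ i c) α) = psiMap bβ (uo hconn a c β) := by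
        rw [uo_comp_sigma hCG hconn hsc a c i]
      rw [heq]
      refine ⟨posOn_of_posroot hCG hconn a bβ c hβR hβpos, ?_⟩
      intro hcon
      have hβi : β = Pi.single i 1 := psi_uo_injective hCG hconn a bβ c hcon
      have hαval : α = gcmSigma (C c) i β := (gcmSigma_inv1 hCG c i α).symm
      rw [hβi, gcmSigma_single_self (C c) i ((hCG.2.1 c).1 i)] at hαval
      have := hαpos i
      rw [hαval] at this
      simp [Pi.single_apply] at this
  · intro h
    rcases h with ⟨hpos, hne⟩ | heq
    · obtain ⟨α, hαR, hαpos, rfl⟩ := posOn_repr hCG hconn hRS a bβ c hγ hpos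
      have hα : α ≠ Pi.single i 1 := by
        intro hcon
        exact hne (by rw [hcon]; rfl)
      set β := gcmSigma (C c) i α with hβ
      have hβR : β ∈ realRootsAt ρ C (ρ i c) := realRootsAt_map (weylHom_sigma c i) hαR
      have hβpos : ∀ j, 0 ≤ β j := sigma_pos hCG hRS hαR hαpos hα
      have heq : psiMap bβ (uo hconn a c α) = psiMap bβ (uo hconn a (ρ i c) β) := by
        rw [uo_comp_sigma hCG hconn hsc a c i, gcmSigma_inv2 hCG c i]
      rw [heq]
      exact posOn_of_posroot hCG hconn a bβ (ρ i c) hβR hβpos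
    · rw [heq, ← gmaF_rho_self hCG hconn hsc a bβ c i]
      exact posOn_gmaF hCG hconn a bβ (ρ i c) i

theorem sep_self_empty (hCG : IsCartanGraph ρ C) (hconn : CGConnected ρ C) (a : A)
    (bβ : Module.Basis (Fin r) ℝ (Module.Dual ℝ (Vr r))) (c : A) :
    SepS hconn a bβ c c = ∅ := by
  ext γ
  simp only [SepS, Set.mem_setOf_eq, Set.mem_empty_iff_false, iff_false, not_and]
  intro _ h1 h2
  exact posOn_not_both hCG hconn a bβ c h1 h2

theorem KcS_eq_posOn (hconn : CGConnected ρ C) (a : A)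
    (bβ : Module.Basis (Fin r) ℝ (Module.Dual ℝ (Vr r))) (c : A) :
    KcS hconn a bβ c
      = {v : Vr r | ∀ γ ∈ geoR ρ C a bβ, PosOnP hconn a bβ γ c → 0 < γ v} := by
  ext v
  constructor
  · intro hv γ _ hγpos
    exact hγpos v hv
  · intro hv
    rw [mem_KcS_iff]
    intro i
    exact hv _ (gmaF_mem_geoR hconn a bβ c i) (fun x hx => hx i)

theorem KcS_eq_of_sep_empty (hCG : IsCartanGraph ρ C) (hconn : CGConnected ρ C)
    (hRS : IsRootSystemOfType ρ C (realRootsAt ρ C)) (a : A)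
    (bβ : Module.Basis (Fin r) ℝ (Module.Dual ℝ (Vr r))) {c c' : A}
    (h : SepS hconn a bβ c c' = ∅) : KcS hconn a bβ c = KcS hconn a bβ c' := by
  have key : ∀ γ ∈ geoR ρ C a bβ, (PosOnP hconn a bβ γ c ↔ PosOnP hconn a bβ γ c') := by
    intro γ hγ
    constructor
    · intro h1
      rcases posOn_dichotomy hCG hconn hRS a bβ c' hγ with h2 | h2
      · exact h2
      · exfalso
        have : γ ∈ SepS hconn a bβ c c' := ⟨hγ, h1, h2⟩
        rw [h] at this
        exact this
    · intro h1
      rcases posOn_dichotomy hCG hconn hRS a bβ c hγ with h2 | h2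
      · exact h2
      · exfalso
        have : -γ ∈ SepS hconn a bβ c c' :=
          ⟨geoR_neg hCG hconn hRS a bβ hγ, h2, by rw [neg_neg]; exact h1⟩
        rw [h] at this
        exact this
  rw [KcS_eq_posOn hconn a bβ c, KcS_eq_posOn hconn a bβ c']
  ext v
  constructor
  · intro hv γ hγ hγpos
    exact hv γ hγ ((key γ hγ).mpr hγpos)
  · intro hv γ hγ hγpos
    exact hv γ hγ ((key γ hγ).mp hγpos)

theorem sep_rho (hCG : IsCartanGraph ρ C) (hconn : CGConnected ρ C)
    (hsc : CGSimplyConnected ρ C) (hRS : IsRootSystemOfType ρ C (realRootsAt ρ C)) (a : A)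
    (bβ : Module.Basis (Fin r) ℝ (Module.Dual ℝ (Vr r))) {c c' : A} {i : Fin r}
    (hi : gmaF hconn a bβ c i ∈ SepS hconn a bβ c c') :
    SepS hconn a bβ (ρ i c) c' = SepS hconn a bβ c c' \ {gmaF hconn a bβ c i} := by
  ext γ
  constructor
  · rintro ⟨hγ, h1, h2⟩
    rcases (posOn_rho_iff hCG hconn hsc hRS a bβ c i hγ).mp h1 with ⟨h3, h4⟩ | h3
    · exact ⟨⟨hγ, h3, h2⟩, h4⟩
    · exfalso
      have h5 : PosOnP hconn a bβ (gmaF hconn a bβ c i) c' := by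
        have : -γ = gmaF hconn a bβ c i := by rw [h3, neg_neg]
        rw [← this]
        exact h2
      exact posOn_not_both hCG hconn a bβ c' h5 hi.2.2
  · rintro ⟨⟨hγ, h1, h2⟩, h4⟩
    refine ⟨hγ, ?_, h2⟩
    exact (posOn_rho_iff hCG hconn hsc hRS a bβ c i hγ).mpr (Or.inl ⟨h1, h4⟩)

theorem sep_desc (hCG : IsCartanGraph ρ C) (hconn : CGConnected ρ C)
    (hRS : IsRootSystemOfType ρ C (realRootsAt ρ C)) (a : A)
    (bβ : Module.Basis (Fin r) ℝ (Module.Dual ℝ (Vr r))) {c c' : A}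
    (h : (SepS hconn a bβ c c').Nonempty) :
    ∃ i, gmaF hconn a bβ c i ∈ SepS hconn a bβ c c' := by
  obtain ⟨γ, hγ, h1, h2⟩ := h
  obtain ⟨α, hαR, hαpos, rfl⟩ := posOn_repr hCG hconn hRS a bβ c hγ h1
  obtain ⟨y, hy⟩ := KcS_nonempty hCG hconn a bβ c'
  have h3 := h2 y hy
  simp only [LinearMap.neg_apply] at h3
  rw [eval_obj hconn a bβ c α y] at h3
  have h4 : ∃ i, gmaF hconn a bβ c i y < 0 := by
    by_contra hcon
    push_neg at hcon
    have : 0 ≤ ∑ j, (α j : ℝ) * (gmaF hconn a bβ c j) y :=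
      Finset.sum_nonneg fun j _ => mul_nonneg (by exact_mod_cast hαpos j) (hcon j)
    linarith
  obtain ⟨i, hi⟩ := h4
  refine ⟨i, gmaF_mem_geoR hconn a bβ c i, posOn_gmaF hCG hconn a bβ c i, ?_⟩
  rcases posOn_dichotomy hCG hconn hRS a bβ c' (gmaF_mem_geoR hconn a bβ c i) with hd | hd
  · exfalso
    have := hd y hy
    linarith
  · exact hd

theorem sep_finite (hCG : IsCartanGraph ρ C) (hconn : CGConnected ρ C)
    (hsc : CGSimplyConnected ρ C) (hRS : IsRootSystemOfType ρ C (realRootsAt ρ C)) (a : A)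
    (bβ : Module.Basis (Fin r) ℝ (Module.Dual ℝ (Vr r))) (c c' : A) :
    (SepS hconn a bβ c c').Finite := by
  obtain ⟨w, hw⟩ := hconn c c'
  have huw : uo hconn a c = uo hconn a c' ∘ w :=
    (uo_unique hCG hconn hsc a (hw.trans (huo hconn a c'))).symm
  apply Set.Finite.subset (Set.Finite.image (fun α => psiMap bβ (uo hconn a c α))
    (inv_finite hCG hRS hw))
  rintro γ ⟨hγ, h1, h2⟩
  obtain ⟨α, hαR, hαpos, rfl⟩ := posOn_repr hCG hconn hRS a bβ c hγ h1
  refine ⟨α, ⟨hαR, hαpos, ?_⟩, rfl⟩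
  have hwα : w α ∈ realRootsAt ρ C c' := realRootsAt_map hw hαR
  rcases root_sign hRS hwα with hp | hn
  · exfalso
    obtain ⟨y, hy⟩ := KcS_nonempty hCG hconn a bβ c'
    have h3 := h2 y hy
    simp only [LinearMap.neg_apply] at h3
    have h4 : psiMap bβ (uo hconn a c α) = psiMap bβ (uo hconn a c' (w α)) := by
      rw [huw]; rfl
    have h5 : PosOnP hconn a bβ (psiMap bβ (uo hconn a c' (w α))) c' :=
      posOn_of_posroot hCG hconn a bβ c' hwα hp
    have := h5 y hy
    rw [← h4] at this
    linarith
  · exact hn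

end ProofD2

section ProofE1
open Module

variable {r : ℕ} {A : Type*} {ρ : Fin r → A → A} {C : A → Matrix (Fin r) (Fin r) ℤ}

theorem eq_of_gma_eq (hCG : IsCartanGraph ρ C) (hconn : CGConnected ρ C) (a : A)
    (bβ : Module.Basis (Fin r) ℝ (Module.Dual ℝ (Vr r))) (c : A) {x y : Vr r}
    (h : ∀ i, gmaF hconn a bβ c i x = gmaF hconn a bβ c i y) : x = y := by
  obtain ⟨bc, hbc⟩ := exists_chBasis_obj hCG hconn a bβ c
  have hall : ∀ φ : Module.Dual ℝ (Vr r), φ x = φ y := by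
    intro φ
    have hrepr : φ = ∑ i, bc.repr φ i • bc i := (bc.sum_repr φ).symm
    rw [hrepr]
    simp only [LinearMap.sum_apply, LinearMap.smul_apply, smul_eq_mul]
    refine Finset.sum_congr rfl fun i _ => ?_
    rw [hbc i, h i]
  funext k
  exact hall (LinearMap.proj k)

theorem facet_inter (hCG : IsCartanGraph ρ C) (hconn : CGConnected ρ C)
    (hsc : CGSimplyConnected ρ C) (a : A) (bβ : Module.Basis (Fin r) ℝ (Module.Dual ℝ (Vr r)))
    (c : A) (i : Fin r) :
    closure (KcS hconn a bβ c) ∩ closure (KcS hconn a bβ (ρ i c))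
      = {x : Vr r | gmaF hconn a bβ c i x = 0 ∧ ∀ j, 0 ≤ gmaF hconn a bβ c j x} := by
  ext x
  rw [Set.mem_inter_iff, closure_KcS hCG hconn a bβ c, closure_KcS hCG hconn a bβ (ρ i c)]
  constructor
  · rintro ⟨h1, h2⟩
    have hi2 := h2 i
    rw [gmaF_rho_self hCG hconn hsc a bβ c i] at hi2
    simp only [LinearMap.neg_apply] at hi2
    exact ⟨le_antisymm (by linarith) (h1 i), h1⟩
  · rintro ⟨h0, h1⟩
    refine ⟨h1, fun j => ?_⟩
    rw [gmaF_rho hCG hconn hsc a bβ c i j]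
    simp only [LinearMap.sub_apply, LinearMap.smul_apply, smul_eq_mul, h0]
    have := h1 j
    linarith

theorem span_facet (hCG : IsCartanGraph ρ C) (hconn : CGConnected ρ C)
    (hsc : CGSimplyConnected ρ C) (a : A) (bβ : Module.Basis (Fin r) ℝ (Module.Dual ℝ (Vr r)))
    (c : A) (i : Fin r) :
    (Submodule.span ℝ (closure (KcS hconn a bβ c) ∩ closure (KcS hconn a bβ (ρ i c)))
      : Set (Vr r)) = dualKer (gmaF hconn a bβ c i) := by
  apply subset_antisymm
  · have hle : Submodule.span ℝ
        (closure (KcS hconn a bβ c) ∩ closure (KcS hconn a bβ (ρ i c)))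
        ≤ LinearMap.ker (gmaF hconn a bβ c i) := by
      rw [Submodule.span_le]
      intro t ht
      rw [facet_inter hCG hconn hsc a bβ c i] at ht
      exact LinearMap.mem_ker.mpr ht.1
    exact fun x hx => hle hx
  · intro x hx
    have hx0 : gmaF hconn a bβ c i x = 0 := hx
    have hvk : ∀ k : Fin r, ∃ v : Vr r, ∀ j,
        gmaF hconn a bβ c j v = if j = k then 1 else 0 := fun k =>
      KcS_pt hCG hconn a bβ c (fun j => if j = k then 1 else 0)
    choose v hv using hvk
    set y : Vr r := ∑ k ∈ Finset.univ.erase i, (gmaF hconn a bβ c k x) • v k with hy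
    have hgy : ∀ j, gmaF hconn a bβ c j y = if j = i then 0 else gmaF hconn a bβ c j x := by
      intro j
      rw [hy, map_sum]
      have : ∀ k ∈ Finset.univ.erase i,
          gmaF hconn a bβ c j ((gmaF hconn a bβ c k x) • v k)
            = if j = k then gmaF hconn a bβ c k x else 0 := by
        intro k _
        rw [map_smul, smul_eq_mul, hv k j]
        by_cases h : j = k <;> simp [h]
      rw [Finset.sum_congr rfl this, Finset.sum_ite_eq (Finset.univ.erase i) j
        (fun k => gmaF hconn a bβ c k x)]
      by_cases h : j = i
      · simp [h]
      · simp [Finset.mem_erase, h]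
    have hxy : x = y := by
      apply eq_of_gma_eq hCG hconn a bβ c
      intro j
      rw [hgy j]
      by_cases h : j = i
      · rw [if_pos h, h, hx0]
      · rw [if_neg h]
    rw [hxy]
    apply Submodule.sum_mem
    intro k hk
    apply Submodule.smul_mem
    apply Submodule.subset_span
    rw [facet_inter hCG hconn hsc a bβ c i]
    refine ⟨?_, fun j => ?_⟩
    · rw [hv k i]
      have : i ≠ k := fun h => (Finset.mem_erase.mp hk).1 h.symm
      simp [this]
    · rw [hv k j]
      by_cases h : j = k <;> simp [h]

theorem KcS_ne_rho (hCG : IsCartanGraph ρ C) (hconn : CGConnected ρ C)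
    (hsc : CGSimplyConnected ρ C) (a : A) (bβ : Module.Basis (Fin r) ℝ (Module.Dual ℝ (Vr r)))
    (c : A) (i : Fin r) : KcS hconn a bβ c ≠ KcS hconn a bβ (ρ i c) := by
  intro h
  obtain ⟨p, hp⟩ := KcS_nonempty hCG hconn a bβ c
  have hp' : p ∈ KcS hconn a bβ (ρ i c) := h ▸ hp
  have h1 := hp i
  have h2 : 0 < gmaF hconn a bβ (ρ i c) i p := hp' i
  rw [gmaF_rho_self hCG hconn hsc a bβ c i] at h2
  simp only [LinearMap.neg_apply] at h2
  have h1' : 0 < gmaF hconn a bβ c i p := h1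
  linarith

theorem objAdj_rho (hCG : IsCartanGraph ρ C) (hconn : CGConnected ρ C)
    (hsc : CGSimplyConnected ρ C) (a : A) (bβ : Module.Basis (Fin r) ℝ (Module.Dual ℝ (Vr r)))
    (c : A) (i : Fin r) : objAdj ρ C a bβ c (ρ i c) := by
  refine ⟨uo hconn a c, uo hconn a (ρ i c), huo hconn a c, huo hconn a (ρ i c), i, ?_, ?_⟩
  · exact KcS_ne_rho hCG hconn hsc a bβ c i
  · exact span_facet hCG hconn hsc a bβ c i

/-- Two chambers that intersect are equal. -/
theorem KcS_eq_of_inter (hCG : IsCartanGraph ρ C) (hconn : CGConnected ρ C)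
    (hRS : IsRootSystemOfType ρ C (realRootsAt ρ C)) (a : A)
    (bβ : Module.Basis (Fin r) ℝ (Module.Dual ℝ (Vr r))) {c c' : A} {p : Vr r}
    (hp : p ∈ KcS hconn a bβ c) (hp' : p ∈ KcS hconn a bβ c') :
    KcS hconn a bβ c = KcS hconn a bβ c' := by
  rw [KcS_eq_posOn hconn a bβ c, KcS_eq_posOn hconn a bβ c']
  ext v
  constructor
  · intro hv γ hγ hγpos
    exact hv γ hγ ((posOn_iff_pt hCG hconn hRS a bβ c hγ hp).mpr
      ((posOn_iff_pt hCG hconn hRS a bβ c' hγ hp').mp hγpos))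
  · intro hv γ hγ hγpos
    exact hv γ hγ ((posOn_iff_pt hCG hconn hRS a bβ c' hγ hp').mpr
      ((posOn_iff_pt hCG hconn hRS a bβ c hγ hp).mp hγpos))

/-- A root vanishing at a relative interior facet point is `±` the wall root. -/
theorem vanish_at_facet (hCG : IsCartanGraph ρ C) (hconn : CGConnected ρ C)
    (hRS : IsRootSystemOfType ρ C (realRootsAt ρ C)) (a : A)
    (bβ : Module.Basis (Fin r) ℝ (Module.Dual ℝ (Vr r))) (c : A) (i : Fin r) {s : Vr r}
    (hs0 : gmaF hconn a bβ c i s = 0) (hspos : ∀ j, j ≠ i → 0 < gmaF hconn a bβ c j s)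
    {γ : Module.Dual ℝ (Vr r)} (hγ : γ ∈ geoR ρ C a bβ) (hγs : γ s = 0) :
    γ = gmaF hconn a bβ c i ∨ γ = -gmaF hconn a bβ c i := by
  have key : ∀ α ∈ realRootsAt ρ C c, (∀ j, 0 ≤ α j) →
      psiMap bβ (uo hconn a c α) s = 0 → psiMap bβ (uo hconn a c α) = gmaF hconn a bβ c i := by
    intro α hαR hαpos hα0
    rw [eval_obj hconn a bβ c α s] at hα0
    have hterm : ∀ j ∈ Finset.univ, 0 ≤ (α j : ℝ) * gmaF hconn a bβ c j s := by
      intro j _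
      by_cases hj : j = i
      · rw [hj, hs0]; simp
      · exact mul_nonneg (by exact_mod_cast hαpos j) (le_of_lt (hspos j hj))
    have hzero : ∀ j ∈ Finset.univ, (α j : ℝ) * gmaF hconn a bβ c j s = 0 :=
      (Finset.sum_eq_zero_iff_of_nonneg hterm).mp hα0
    have hαj : ∀ j, j ≠ i → α j = 0 := by
      intro j hj
      have := hzero j (Finset.mem_univ j)
      rcases mul_eq_zero.mp this with h | h
      · exact_mod_cast h
      · exact absurd h (ne_of_gt (hspos j hj))
    have hsingle : α = (α i) • Pi.single i 1 := by
      funext k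
      by_cases hk : k = i
      · subst hk; simp [Pi.single_apply]
      · simp [Pi.single_apply, hk, hαj k hk]
    rcases root_single hRS hαR ⟨α i, hsingle⟩ with h1 | h1
    · rw [h1]; rfl
    · exfalso
      have := congrFun h1 i
      simp [Pi.single_apply] at this
      have := hαpos i
      omega
  obtain ⟨α, hαR, rfl⟩ := (mem_geoR_iff hCG hconn a bβ c γ).mp hγ
  rcases root_sign hRS hαR with hp | hn
  · exact Or.inl (key α hαR hp hγs)
  · right
    have h1 : psiMap bβ (uo hconn a c (-α)) = -psiMap bβ (uo hconn a c α) := by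
      rw [uo_neg, psiMap_neg]
    have h2 : psiMap bβ (uo hconn a c (-α)) s = 0 := by
      rw [h1]
      simp only [LinearMap.neg_apply, hγs, neg_zero]
    have h3 := key (-α) (root_neg hRS hαR) (fun j => by have := hn j; simp; omega) h2
    rw [h1] at h3
    rw [← neg_eq_iff_eq_neg]
    exact h3

end ProofE1

section ProofE2
open Module Filter

variable {r : ℕ} {A : Type*} {ρ : Fin r → A → A} {C : A → Matrix (Fin r) (Fin r) ℤ}

theorem eventually_pos_perturb (φ : Module.Dual ℝ (Vr r)) (s d : Vr r) (h : 0 < φ s) :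
    ∀ᶠ ε in nhdsWithin (0:ℝ) (Set.Ioi 0), 0 < φ (s + ε • d) := by
  have heq : ∀ ε : ℝ, φ (s + ε • d) = φ s + ε * φ d := by
    intro ε
    rw [map_add, map_smul]
    rfl
  have hcont : Continuous fun ε : ℝ => φ s + ε * φ d := by continuity
  have htend : Tendsto (fun ε : ℝ => φ s + ε * φ d) (nhdsWithin 0 (Set.Ioi 0))
      (nhds (φ s)) := by
    have h0 : Tendsto (fun ε : ℝ => φ s + ε * φ d) (nhds 0) (nhds (φ s + 0 * φ d)) :=
      hcont.tendsto 0
    rw [zero_mul, add_zero] at h0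
    exact h0.mono_left nhdsWithin_le_nhds
  have := htend.eventually_const_lt h
  exact this.mono fun ε hε => by rw [heq]; exact hε

/-- Adjacent objects have mirror chambers. -/
theorem objAdj_structure (hCG : IsCartanGraph ρ C) (hconn : CGConnected ρ C)
    (hsc : CGSimplyConnected ρ C) (hRS : IsRootSystemOfType ρ C (realRootsAt ρ C)) (a : A)
    (bβ : Module.Basis (Fin r) ℝ (Module.Dual ℝ (Vr r))) {c c' : A} (h : objAdj ρ C a bβ c c') :
    ∃ i, KcS hconn a bβ c' = KcS hconn a bβ (ρ i c) := by
  obtain ⟨u, u', hu, hu', i, hne, hspan⟩ := h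
  rw [uo_unique hCG hconn hsc a hu, uo_unique hCG hconn hsc a hu'] at hne hspan
  have hne' : KcS hconn a bβ c ≠ KcS hconn a bβ c' := hne
  have hspan' : (Submodule.span ℝ
      (closure (KcS hconn a bβ c) ∩ closure (KcS hconn a bβ c')) : Set (Vr r))
      = dualKer (gmaF hconn a bβ c i) := hspan
  refine ⟨i, ?_⟩
  set S := closure (KcS hconn a bβ c) ∩ closure (KcS hconn a bβ c') with hS
  have hSi : ∀ t ∈ S, gmaF hconn a bβ c i t = 0 := by
    intro t ht
    have h1 : t ∈ (Submodule.span ℝ S : Set (Vr r)) := Submodule.subset_span ht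
    rw [hspan'] at h1
    exact h1
  have htj : ∀ j : Fin r, j ≠ i → ∃ t ∈ S, 0 < gmaF hconn a bβ c j t := by
    intro j hj
    by_contra hcon
    push_neg at hcon
    have hker : S ⊆ (LinearMap.ker (gmaF hconn a bβ c j) : Set (Vr r)) := by
      intro t ht
      have ht1 := ht.1
      rw [closure_KcS hCG hconn a bβ c] at ht1
      exact LinearMap.mem_ker.mpr (le_antisymm (hcon t ht) (ht1 j))
    have hle : Submodule.span ℝ S ≤ LinearMap.ker (gmaF hconn a bβ c j) :=
      Submodule.span_le.mpr hker
    obtain ⟨v0, hv0⟩ := KcS_pt hCG hconn a bβ c (fun k => if k = j then 1 else 0)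
    have hv0i : v0 ∈ dualKer (gmaF hconn a bβ c i) := by
      show gmaF hconn a bβ c i v0 = 0
      rw [hv0 i]
      simp [Ne.symm hj]
    rw [← hspan'] at hv0i
    have h2 : gmaF hconn a bβ c j v0 = 0 := hle hv0i
    rw [hv0 j] at h2
    simp at h2
  choose t htS htpos using htj
  set t' : Fin r → Vr r := fun j => if hj : j ≠ i then t j hj else 0 with ht'
  set s : Vr r := ∑ j ∈ Finset.univ.erase i, t' j with hs
  have ht'S : ∀ j ∈ Finset.univ.erase i, t' j ∈ S := by
    intro j hj
    have hji : j ≠ i := (Finset.mem_erase.mp hj).1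
    rw [ht']
    simp only [dif_pos hji]
    exact htS j hji
  have hscl : ∀ (e : A), (∀ j ∈ Finset.univ.erase i, t' j ∈ closure (KcS hconn a bβ e)) →
      s ∈ closure (KcS hconn a bβ e) := by
    intro e he
    rw [closure_KcS hCG hconn a bβ e] at he ⊢
    intro k
    rw [hs, map_sum]
    exact Finset.sum_nonneg fun j hj => he j hj k
  have hsc1 : s ∈ closure (KcS hconn a bβ c) := hscl c fun j hj => (ht'S j hj).1
  have hsc2 : s ∈ closure (KcS hconn a bβ c') := hscl c' fun j hj => (ht'S j hj).2
  have hs0 : gmaF hconn a bβ c i s = 0 := by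
    rw [hs, map_sum]
    exact Finset.sum_eq_zero fun j hj => hSi _ (ht'S j hj)
  have hspos : ∀ j, j ≠ i → 0 < gmaF hconn a bβ c j s := by
    intro j hj
    rw [hs, map_sum]
    apply Finset.sum_pos'
    · intro k hk
      have h1 := (ht'S k hk).1
      rw [closure_KcS hCG hconn a bβ c] at h1
      exact h1 j
    · refine ⟨j, Finset.mem_erase.mpr ⟨hj, Finset.mem_univ j⟩, ?_⟩
      rw [ht']
      simp only [dif_pos hj]
      exact htpos j hj
  obtain ⟨d, hd⟩ := KcS_pt hCG hconn a bβ c (fun _ => 1)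
  have hsc2' := hsc2
  rw [closure_KcS hCG hconn a bβ c'] at hsc2'
  have hvan : ∀ k, gmaF hconn a bβ c' k s = 0 →
      gmaF hconn a bβ c' k = gmaF hconn a bβ c i ∨
        gmaF hconn a bβ c' k = -gmaF hconn a bβ c i := fun k hk =>
    vanish_at_facet hCG hconn hRS a bβ c i hs0 hspos (gmaF_mem_geoR hconn a bβ c' k) hk
  by_cases hcaseX : ∃ k, gmaF hconn a bβ c' k s = 0 ∧
      gmaF hconn a bβ c' k = gmaF hconn a bβ c i
  · -- then K_c = K_{c'}, contradiction
    exfalso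
    obtain ⟨k0, hk0s, hk0⟩ := hcaseX
    have hnoneg : ∀ k, gmaF hconn a bβ c' k ≠ -gmaF hconn a bβ c i := by
      intro k hk
      apply posOn_not_both hCG hconn a bβ c' (γ := gmaF hconn a bβ c i)
      · rw [← hk0]
        exact posOn_gmaF hCG hconn a bβ c' k0
      · rw [← hk]
        exact posOn_gmaF hCG hconn a bβ c' k
    have hev1 : ∀ᶠ ε in nhdsWithin (0:ℝ) (Set.Ioi 0),
        ∀ j, 0 < gmaF hconn a bβ c j (s + ε • d) := by
      rw [eventually_all]
      intro j
      by_cases hj : j = i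
      · subst hj
        refine Filter.eventually_of_mem self_mem_nhdsWithin fun ε hε => ?_
        have : gmaF hconn a bβ c j (s + ε • d) = gmaF hconn a bβ c j s
            + ε * gmaF hconn a bβ c j d := by rw [map_add, map_smul]; rfl
        rw [this, hs0, hd j, zero_add, mul_one]
        exact hε
      · exact eventually_pos_perturb _ s d (hspos j hj)
    have hev2 : ∀ᶠ ε in nhdsWithin (0:ℝ) (Set.Ioi 0),
        ∀ k, 0 < gmaF hconn a bβ c' k (s + ε • d) := by
      rw [eventually_all]
      intro k
      rcases lt_or_eq_of_le (hsc2' k) with hpos | hzero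
      · exact eventually_pos_perturb _ s d hpos
      · have hk0' : gmaF hconn a bβ c' k s = 0 := hzero.symm
        have hk' : gmaF hconn a bβ c' k = gmaF hconn a bβ c i := by
          rcases hvan k hk0' with h1 | h1
          · exact h1
          · exact absurd h1 (hnoneg k)
        refine Filter.eventually_of_mem self_mem_nhdsWithin fun ε hε => ?_
        have : gmaF hconn a bβ c' k (s + ε • d) = gmaF hconn a bβ c' k s
            + ε * gmaF hconn a bβ c' k d := by rw [map_add, map_smul]; rfl
        rw [this, hk0', hk', hd i, zero_add, mul_one]
        exact hε
    obtain ⟨ε, h1, h2⟩ := (hev1.and hev2).exists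
    exact hne' (KcS_eq_of_inter hCG hconn hRS a bβ
      (p := s + ε • d) (fun j => h1 j) (fun k => h2 k))
  · -- the generic case: K_{c'} = K_{ρ i c}
    push_neg at hcaseX
    have hev1 : ∀ᶠ ε in nhdsWithin (0:ℝ) (Set.Ioi 0),
        ∀ j, 0 < gmaF hconn a bβ (ρ i c) j (s + ε • (-d)) := by
      rw [eventually_all]
      intro j
      by_cases hj : j = i
      · subst hj
        refine Filter.eventually_of_mem self_mem_nhdsWithin fun ε hε => ?_
        have heval : gmaF hconn a bβ (ρ j c) j (s + ε • (-d))
            = -(gmaF hconn a bβ c j (s + ε • (-d))) := by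
          rw [gmaF_rho_self hCG hconn hsc a bβ c j]
          rfl
        rw [heval, map_add, map_smul]
        have : gmaF hconn a bβ c j (-d) = -gmaF hconn a bβ c j d := by
          rw [map_neg]
        rw [this, hs0, hd j]
        simp only [smul_eq_mul, mul_neg, mul_one, zero_add, neg_neg]
        exact hε
      · have hpos : 0 < gmaF hconn a bβ (ρ i c) j s := by
          rw [gmaF_rho hCG hconn hsc a bβ c i j]
          simp only [LinearMap.sub_apply, LinearMap.smul_apply, smul_eq_mul, hs0, mul_zero,
            sub_zero]
          exact hspos j hj
        exact eventually_pos_perturb _ s (-d) hpos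
    have hev2 : ∀ᶠ ε in nhdsWithin (0:ℝ) (Set.Ioi 0),
        ∀ k, 0 < gmaF hconn a bβ c' k (s + ε • (-d)) := by
      rw [eventually_all]
      intro k
      rcases lt_or_eq_of_le (hsc2' k) with hpos | hzero
      · exact eventually_pos_perturb _ s (-d) hpos
      · have hk0' : gmaF hconn a bβ c' k s = 0 := hzero.symm
        have hk' : gmaF hconn a bβ c' k = -gmaF hconn a bβ c i := by
          rcases hvan k hk0' with h1 | h1
          · exact absurd h1 (hcaseX k hk0')
          · exact h1
        refine Filter.eventually_of_mem self_mem_nhdsWithin fun ε hε => ?_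
        have heval : gmaF hconn a bβ c' k (s + ε • (-d))
            = gmaF hconn a bβ c' k s + ε * gmaF hconn a bβ c' k (-d) := by
          rw [map_add, map_smul]; rfl
        rw [heval, hk0', hk']
        simp only [LinearMap.neg_apply, map_neg, neg_neg, zero_add]
        rw [hd i, mul_one]
        exact hε
    obtain ⟨ε, h1, h2⟩ := (hev1.and hev2).exists
    exact (KcS_eq_of_inter hCG hconn hRS a bβ
      (p := s + ε • (-d)) (fun k => h2 k) (fun j => h1 j))

end ProofE2

section ProofF
open Module

variable {r : ℕ} {A : Type*} {ρ : Fin r → A → A} {C : A → Matrix (Fin r) (Fin r) ℤ}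

/-- Galleries between objects. -/
def IsGal (ρ : Fin r → A → A) (C : A → Matrix (Fin r) (Fin r) ℤ) (a : A)
    (bβ : Module.Basis (Fin r) ℝ (Module.Dual ℝ (Vr r))) (m : ℕ) (g : ℕ → A) (c c' : A) : Prop :=
  g 0 = c ∧ g m = c' ∧ ∀ k < m, objAdj ρ C a bβ (g k) (g (k + 1))

theorem posOn_congr (hconn : CGConnected ρ C) (a : A)
    (bβ : Module.Basis (Fin r) ℝ (Module.Dual ℝ (Vr r))) {c c' : A}
    (h : KcS hconn a bβ c = KcS hconn a bβ c') (γ : Module.Dual ℝ (Vr r)) :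
    PosOnP hconn a bβ γ c ↔ PosOnP hconn a bβ γ c' := by
  unfold PosOnP
  rw [h]

theorem sep_congr (hconn : CGConnected ρ C) (a : A)
    (bβ : Module.Basis (Fin r) ℝ (Module.Dual ℝ (Vr r))) {c c' c'' : A}
    (h : KcS hconn a bβ c' = KcS hconn a bβ c'') :
    SepS hconn a bβ c c' = SepS hconn a bβ c c'' := by
  unfold SepS
  ext γ
  simp only [Set.mem_setOf_eq]
  rw [posOn_congr hconn a bβ h (-γ)]

theorem sep_pair (hCG : IsCartanGraph ρ C) (hconn : CGConnected ρ C)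
    (hsc : CGSimplyConnected ρ C) (hRS : IsRootSystemOfType ρ C (realRootsAt ρ C)) (a : A)
    (bβ : Module.Basis (Fin r) ℝ (Module.Dual ℝ (Vr r))) (c : A) (i : Fin r) :
    SepS hconn a bβ c (ρ i c) = {gmaF hconn a bβ c i} := by
  ext γ
  constructor
  · rintro ⟨hγ, h1, h2⟩
    rcases (posOn_rho_iff hCG hconn hsc hRS a bβ c i
        (geoR_neg hCG hconn hRS a bβ hγ)).mp h2 with ⟨h3, _⟩ | h3
    · exact (posOn_not_both hCG hconn a bβ c h1 h3).elim
    · exact neg_injective h3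
  · rintro rfl
    refine ⟨gmaF_mem_geoR hconn a bβ c i, posOn_gmaF hCG hconn a bβ c i, ?_⟩
    rw [← gmaF_rho_self hCG hconn hsc a bβ c i]
    exact posOn_gmaF hCG hconn a bβ (ρ i c) i

theorem sep_adj (hCG : IsCartanGraph ρ C) (hconn : CGConnected ρ C)
    (hsc : CGSimplyConnected ρ C) (hRS : IsRootSystemOfType ρ C (realRootsAt ρ C)) (a : A)
    (bβ : Module.Basis (Fin r) ℝ (Module.Dual ℝ (Vr r))) {c c' : A} (h : objAdj ρ C a bβ c c') :
    ∃ i, SepS hconn a bβ c c' = {gmaF hconn a bβ c i} := by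
  obtain ⟨i, heq⟩ := objAdj_structure hCG hconn hsc hRS a bβ h
  exact ⟨i, by rw [sep_congr hconn a bβ heq, sep_pair hCG hconn hsc hRS a bβ c i]⟩

theorem sep_union_sub (hCG : IsCartanGraph ρ C) (hconn : CGConnected ρ C)
    (hRS : IsRootSystemOfType ρ C (realRootsAt ρ C)) (a : A)
    (bβ : Module.Basis (Fin r) ℝ (Module.Dual ℝ (Vr r))) (c c' c'' : A) :
    SepS hconn a bβ c c'' ⊆ SepS hconn a bβ c c' ∪ SepS hconn a bβ c' c'' := by
  rintro γ ⟨hγ, h1, h2⟩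
  rcases posOn_dichotomy hCG hconn hRS a bβ c' hγ with h3 | h3
  · exact Or.inr ⟨hγ, h3, h2⟩
  · exact Or.inl ⟨hγ, h1, h3⟩

theorem sep_ncard_le_gallery (hCG : IsCartanGraph ρ C) (hconn : CGConnected ρ C)
    (hsc : CGSimplyConnected ρ C) (hRS : IsRootSystemOfType ρ C (realRootsAt ρ C)) (a : A)
    (bβ : Module.Basis (Fin r) ℝ (Module.Dual ℝ (Vr r))) :
    ∀ (m : ℕ) (g : ℕ → A) (c c' : A), IsGal ρ C a bβ m g c c' →
      (SepS hconn a bβ c c').ncard ≤ m := by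
  intro m
  induction m with
  | zero =>
      intro g c c' hg
      have : c = c' := hg.1.symm.trans hg.2.1
      subst this
      rw [sep_self_empty hCG hconn a bβ c]
      simp
  | succ m ih =>
      intro g c c' hg
      have hg' : IsGal ρ C a bβ m (fun k => g (k + 1)) (g 1) c' :=
        ⟨rfl, hg.2.1, fun k hk => hg.2.2 (k + 1) (by omega)⟩
      have h1 : (SepS hconn a bβ (g 1) c').ncard ≤ m := ih _ _ _ hg'
      have hadj : objAdj ρ C a bβ c (g 1) := by
        have := hg.2.2 0 (by omega)
        rwa [hg.1] at this
      obtain ⟨i, hsep⟩ := sep_adj hCG hconn hsc hRS a bβ hadj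
      have h2 : (SepS hconn a bβ c (g 1)).ncard = 1 := by rw [hsep]; simp
      calc (SepS hconn a bβ c c').ncard
          ≤ (SepS hconn a bβ c (g 1) ∪ SepS hconn a bβ (g 1) c').ncard :=
            Set.ncard_le_ncard (sep_union_sub hCG hconn hRS a bβ c (g 1) c')
              ((sep_finite hCG hconn hsc hRS a bβ c (g 1)).union
                (sep_finite hCG hconn hsc hRS a bβ (g 1) c'))
        _ ≤ (SepS hconn a bβ c (g 1)).ncard + (SepS hconn a bβ (g 1) c').ncard :=
            Set.ncard_union_le _ _
        _ ≤ 1 + m := by omega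
        _ = m + 1 := by omega

theorem objAdj_of_chamber_eq (hCG : IsCartanGraph ρ C) (hconn : CGConnected ρ C)
    (hsc : CGSimplyConnected ρ C) (a : A) (bβ : Module.Basis (Fin r) ℝ (Module.Dual ℝ (Vr r)))
    {c c' : A} {i : Fin r} (heq : KcS hconn a bβ c' = KcS hconn a bβ (ρ i c)) :
    objAdj ρ C a bβ c c' := by
  refine ⟨uo hconn a c, uo hconn a c', huo hconn a c, huo hconn a c', i, ?_, ?_⟩
  · show KcS hconn a bβ c ≠ KcS hconn a bβ c'
    rw [heq]
    exact KcS_ne_rho hCG hconn hsc a bβ c i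
  · show (Submodule.span ℝ (closure (KcS hconn a bβ c) ∩ closure (KcS hconn a bβ c'))
        : Set (Vr r)) = dualKer (gmaF hconn a bβ c i)
    rw [heq]
    exact span_facet hCG hconn hsc a bβ c i

theorem gallery_cons {a : A} {bβ : Module.Basis (Fin r) ℝ (Module.Dual ℝ (Vr r))}
    {c e c' : A} {m : ℕ} {g : ℕ → A}
    (hadj : objAdj ρ C a bβ c e) (hg : IsGal ρ C a bβ m g e c') :
    IsGal ρ C a bβ (m + 1) (fun k => if k = 0 then c else g (k - 1)) c c' := by
  refine ⟨rfl, ?_, fun k hk => ?_⟩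
  · show (if m + 1 = 0 then c else g (m + 1 - 1)) = c'
    rw [if_neg (by omega : ¬(m + 1 = 0))]
    have : m + 1 - 1 = m := by omega
    rw [this]
    exact hg.2.1
  · by_cases hk0 : k = 0
    · subst hk0
      show objAdj ρ C a bβ (if 0 = 0 then c else _) (if 1 = 0 then c else g (1 - 1))
      rw [if_pos rfl, if_neg (by omega : ¬(1 = 0))]
      show objAdj ρ C a bβ c (g 0)
      rw [hg.1]
      exact hadj
    · show objAdj ρ C a bβ (if k = 0 then c else g (k - 1))
        (if k + 1 = 0 then c else g (k + 1 - 1))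
      rw [if_neg hk0, if_neg (by omega : ¬(k + 1 = 0))]
      have : k + 1 - 1 = (k - 1) + 1 := by omega
      rw [this]
      exact hg.2.2 (k - 1) (by omega)

theorem gallery_exists (hCG : IsCartanGraph ρ C) (hconn : CGConnected ρ C)
    (hsc : CGSimplyConnected ρ C) (hRS : IsRootSystemOfType ρ C (realRootsAt ρ C)) (a : A)
    (bβ : Module.Basis (Fin r) ℝ (Module.Dual ℝ (Vr r))) :
    ∀ (n : ℕ) (c c' : A), (SepS hconn a bβ c c').ncard = n → 0 < n →
      ∃ g, IsGal ρ C a bβ n g c c' := by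
  intro n
  induction n with
  | zero => intro c c' _ h; omega
  | succ n ih =>
      intro c c' hn _
      have hfin := sep_finite hCG hconn hsc hRS a bβ c c'
      have hne : (SepS hconn a bβ c c').Nonempty := by
        apply Set.nonempty_of_ncard_ne_zero
        omega
      obtain ⟨i, hi⟩ := sep_desc hCG hconn hRS a bβ hne
      have hrho := sep_rho hCG hconn hsc hRS a bβ hi
      have hcard : (SepS hconn a bβ (ρ i c) c').ncard = n := by
        rw [hrho, Set.ncard_diff_singleton_of_mem hi, hn]
        omega
      by_cases hn0 : n = 0
      · subst hn0
        have hempty : SepS hconn a bβ (ρ i c) c' = ∅ :=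
          (Set.ncard_eq_zero (sep_finite hCG hconn hsc hRS a bβ (ρ i c) c')).mp hcard
        have heq : KcS hconn a bβ (ρ i c) = KcS hconn a bβ c' :=
          KcS_eq_of_sep_empty hCG hconn hRS a bβ hempty
        refine ⟨fun k => if k = 0 then c else c', by simp, by simp, fun k hk => ?_⟩
        have hk0 : k = 0 := by omega
        subst hk0
        simp only [if_pos rfl, if_neg (by omega : ¬(1 = 0))]
        exact objAdj_of_chamber_eq hCG hconn hsc a bβ heq.symm
      · obtain ⟨g, hg⟩ := ih (ρ i c) c' hcard (by omega)
        exact ⟨_, gallery_cons (objAdj_rho hCG hconn hsc a bβ c i) hg⟩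

theorem fin_pos_of_hom_ne (h : ∃ f, WeylHom ρ C b b' f) (hne : b ≠ b') :
    Nonempty (Fin r) := by
  obtain ⟨f, hf⟩ := h
  cases hf with
  | id => exact absurd rfl hne
  | comp i _ => exact ⟨i⟩

/-- Existence of some gallery between any two objects. -/
theorem gallery_nonempty (hCG : IsCartanGraph ρ C) (hconn : CGConnected ρ C)
    (hsc : CGSimplyConnected ρ C) (hRS : IsRootSystemOfType ρ C (realRootsAt ρ C)) (a : A)
    (bβ : Module.Basis (Fin r) ℝ (Module.Dual ℝ (Vr r))) (c c' : A) :
    ∃ m g, IsGal ρ C a bβ m g c c' := by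
  by_cases hcc : c = c'
  · exact ⟨0, fun _ => c, rfl, by rw [hcc], fun k hk => by omega⟩
  · by_cases hn : 0 < (SepS hconn a bβ c c').ncard
    · obtain ⟨g, hg⟩ := gallery_exists hCG hconn hsc hRS a bβ _ c c' rfl hn
      exact ⟨_, g, hg⟩
    · have hempty : SepS hconn a bβ c c' = ∅ := by
        rw [← Set.ncard_eq_zero (sep_finite hCG hconn hsc hRS a bβ c c')]
        omega
      have heq : KcS hconn a bβ c = KcS hconn a bβ c' :=
        KcS_eq_of_sep_empty hCG hconn hRS a bβ hempty
      obtain ⟨i0⟩ := fin_pos_of_hom_ne (hconn c c') hcc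
      refine ⟨2, fun k => if k = 0 then c else if k = 1 then ρ i0 c else c',
        by simp, by simp, fun k hk => ?_⟩
      interval_cases k
      · show objAdj ρ C a bβ c (ρ i0 c)
        exact objAdj_rho hCG hconn hsc a bβ c i0
      · show objAdj ρ C a bβ (ρ i0 c) c'
        apply objAdj_of_chamber_eq hCG hconn hsc a bβ (i := i0)
        rw [(hCG.2.2.1 i0) c]
        exact heq.symm
      
end ProofF

section ProofG
open Module

variable {r : ℕ} {A : Type*} {ρ : Fin r → A → A} {C : A → Matrix (Fin r) (Fin r) ℤ}

theorem galleryDist_mem_iff (a : A) (bβ : Module.Basis (Fin r) ℝ (Module.Dual ℝ (Vr r)))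
    (b b' : A) (m : ℕ) :
    (m ∈ {m : ℕ | ∃ g : ℕ → A, g 0 = b ∧ g m = b' ∧
      ∀ k < m, objAdj ρ C a bβ (g k) (g (k + 1))}) ↔ ∃ g, IsGal ρ C a bβ m g b b' :=
  Iff.rfl

theorem galleryDist_self (a : A) (bβ : Module.Basis (Fin r) ℝ (Module.Dual ℝ (Vr r))) (b : A) :
    galleryDist ρ C a bβ b b = 0 := by
  apply Nat.sInf_eq_zero.mpr
  left
  exact ⟨fun _ => b, rfl, rfl, fun k hk => by omega⟩

theorem galleryDist_main (hCG : IsCartanGraph ρ C) (hconn : CGConnected ρ C)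
    (hsc : CGSimplyConnected ρ C) (hRS : IsRootSystemOfType ρ C (realRootsAt ρ C)) (a : A)
    (bβ : Module.Basis (Fin r) ℝ (Module.Dual ℝ (Vr r))) (b b' : A)
    (h : 0 < (SepS hconn a bβ b b').ncard) :
    galleryDist ρ C a bβ b b' = (SepS hconn a bβ b b').ncard := by
  have hmem : (SepS hconn a bβ b b').ncard ∈ {m : ℕ | ∃ g : ℕ → A, g 0 = b ∧ g m = b' ∧
      ∀ k < m, objAdj ρ C a bβ (g k) (g (k + 1))} := by
    obtain ⟨g, hg⟩ := gallery_exists hCG hconn hsc hRS a bβ _ b b' rfl h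
    exact ⟨g, hg⟩
  apply le_antisymm
  · exact Nat.sInf_le hmem
  · have hne : {m : ℕ | ∃ g : ℕ → A, g 0 = b ∧ g m = b' ∧
        ∀ k < m, objAdj ρ C a bβ (g k) (g (k + 1))}.Nonempty := ⟨_, hmem⟩
    obtain ⟨g, hg⟩ := Nat.sInf_mem hne
    exact sep_ncard_le_gallery hCG hconn hsc hRS a bβ _ g b b' hg

theorem galleryDist_degen (hCG : IsCartanGraph ρ C) (hconn : CGConnected ρ C)
    (hsc : CGSimplyConnected ρ C) (hRS : IsRootSystemOfType ρ C (realRootsAt ρ C)) (a : A)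
    (bβ : Module.Basis (Fin r) ℝ (Module.Dual ℝ (Vr r))) (b b' : A) (hne : b ≠ b')
    (h0 : SepS hconn a bβ b b' = ∅) :
    galleryDist ρ C a bβ b b' = 2 := by
  have heq : KcS hconn a bβ b = KcS hconn a bβ b' := KcS_eq_of_sep_empty hCG hconn hRS a bβ h0
  obtain ⟨i0⟩ := fin_pos_of_hom_ne (hconn b b') hne
  have hmem : (2 : ℕ) ∈ {m : ℕ | ∃ g : ℕ → A, g 0 = b ∧ g m = b' ∧
      ∀ k < m, objAdj ρ C a bβ (g k) (g (k + 1))} := by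
    refine ⟨fun k => if k = 0 then b else if k = 1 then ρ i0 b else b', by simp, by simp,
      fun k hk => ?_⟩
    interval_cases k
    · show objAdj ρ C a bβ b (ρ i0 b)
      exact objAdj_rho hCG hconn hsc a bβ b i0
    · show objAdj ρ C a bβ (ρ i0 b) b'
      apply objAdj_of_chamber_eq hCG hconn hsc a bβ (i := i0)
      rw [(hCG.2.2.1 i0) b]
      exact heq.symm
  apply le_antisymm
  · exact Nat.sInf_le hmem
  · obtain ⟨g, hg0, hgm, hgadj⟩ := Nat.sInf_mem (⟨2, hmem⟩ :
      Set.Nonempty {m : ℕ | ∃ g : ℕ → A, g 0 = b ∧ g m = b' ∧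
        ∀ k < m, objAdj ρ C a bβ (g k) (g (k + 1))})
    have hDif : galleryDist ρ C a bβ b b' = sInf {m : ℕ | ∃ g : ℕ → A, g 0 = b ∧ g m = b' ∧
        ∀ k < m, objAdj ρ C a bβ (g k) (g (k + 1))} := rfl
    rw [← hDif] at hgm hgadj
    rcases Nat.lt_or_ge (galleryDist ρ C a bβ b b') 2 with hlt | hge
    · exfalso
      have h01 : galleryDist ρ C a bβ b b' = 0 ∨ galleryDist ρ C a bβ b b' = 1 :=
        by rcases Nat.lt_succ_iff_lt_or_eq.mp hlt with h | h
           · left; exact Nat.lt_one_iff.mp h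
           · right; exact h
      rcases h01 with h | h
      · rw [h] at hgm
        exact hne (hg0.symm.trans hgm)
      · rw [h] at hgm
        have hadj : objAdj ρ C a bβ b b' := by
          have h2 := hgadj 0 (by rw [h]; exact one_pos)
          rwa [hg0, show (0:ℕ)+1 = 1 from rfl, hgm] at h2
        obtain ⟨u, u', hu, hu', i, hKne, _⟩ := hadj
        rw [uo_unique hCG hconn hsc a hu, uo_unique hCG hconn hsc a hu'] at hKne
        exact hKne heq
    · exact hge

/-- The chamber covering lemma: every point `z` with finite "bad set" w.r.t. some chamber
lies in the closure of some chamber. -/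
theorem chamber_cover (hCG : IsCartanGraph ρ C) (hconn : CGConnected ρ C)
    (hsc : CGSimplyConnected ρ C) (hRS : IsRootSystemOfType ρ C (realRootsAt ρ C)) (a : A)
    (bβ : Module.Basis (Fin r) ℝ (Module.Dual ℝ (Vr r))) :
    ∀ (n : ℕ) (c : A) (z : Vr r),
      ({γ ∈ geoR ρ C a bβ | PosOnP hconn a bβ γ c ∧ γ z ≤ 0}).Finite →
      ({γ ∈ geoR ρ C a bβ | PosOnP hconn a bβ γ c ∧ γ z ≤ 0}).ncard ≤ n →
      ∃ e, z ∈ closure (KcS hconn a bβ e) := by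
  intro n
  induction n with
  | zero =>
      intro c z hfin hcard
      by_cases hall : ∀ i, 0 ≤ gmaF hconn a bβ c i z
      · exact ⟨c, by rw [closure_KcS hCG hconn a bβ c]; exact hall⟩
      · exfalso
        push_neg at hall
        obtain ⟨i, hi⟩ := hall
        have hmem : gmaF hconn a bβ c i
            ∈ {γ ∈ geoR ρ C a bβ | PosOnP hconn a bβ γ c ∧ γ z ≤ 0} :=
          ⟨gmaF_mem_geoR hconn a bβ c i, posOn_gmaF hCG hconn a bβ c i, le_of_lt hi⟩
        have := (Set.ncard_pos hfin).mpr ⟨_, hmem⟩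
        omega
  | succ n ih =>
      intro c z hfin hcard
      by_cases hall : ∀ i, 0 ≤ gmaF hconn a bβ c i z
      · exact ⟨c, by rw [closure_KcS hCG hconn a bβ c]; exact hall⟩
      · push_neg at hall
        obtain ⟨i, hi⟩ := hall
        have hmem : gmaF hconn a bβ c i
            ∈ {γ ∈ geoR ρ C a bβ | PosOnP hconn a bβ γ c ∧ γ z ≤ 0} :=
          ⟨gmaF_mem_geoR hconn a bβ c i, posOn_gmaF hCG hconn a bβ c i, le_of_lt hi⟩
        have hstep : {γ ∈ geoR ρ C a bβ | PosOnP hconn a bβ γ (ρ i c) ∧ γ z ≤ 0}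
            ⊆ {γ ∈ geoR ρ C a bβ | PosOnP hconn a bβ γ c ∧ γ z ≤ 0}
              \ {gmaF hconn a bβ c i} := by
          rintro γ ⟨hγ, h1, h2⟩
          rcases (posOn_rho_iff hCG hconn hsc hRS a bβ c i hγ).mp h1 with ⟨h3, h4⟩ | h3
          · exact ⟨⟨hγ, h3, h2⟩, h4⟩
          · exfalso
            rw [h3] at h2
            simp only [LinearMap.neg_apply] at h2
            linarith
        have hfin' : ({γ ∈ geoR ρ C a bβ | PosOnP hconn a bβ γ (ρ i c) ∧ γ z ≤ 0}).Finite :=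
          hfin.subset (hstep.trans Set.diff_subset)
        have hcard' : ({γ ∈ geoR ρ C a bβ | PosOnP hconn a bβ γ (ρ i c) ∧ γ z ≤ 0}).ncard
            ≤ n := by
          have h1 : ({γ ∈ geoR ρ C a bβ | PosOnP hconn a bβ γ (ρ i c) ∧ γ z ≤ 0}).ncard
              ≤ ({γ ∈ geoR ρ C a bβ | PosOnP hconn a bβ γ c ∧ γ z ≤ 0}
                \ {gmaF hconn a bβ c i}).ncard :=
            Set.ncard_le_ncard hstep hfin.diff
          rw [Set.ncard_diff_singleton_of_mem hmem] at h1
          omega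
        exact ih (ρ i c) z hfin' hcard'

end ProofG

section ProofH
open Module

variable {r : ℕ} {A : Type*} {ρ : Fin r → A → A} {C : A → Matrix (Fin r) (Fin r) ℤ}

theorem seg_val {γ : Module.Dual ℝ (Vr r)} {x y z : Vr r} (hz : z ∈ segment ℝ x y) :
    ∃ u₁ u₂ : ℝ, 0 ≤ u₁ ∧ 0 ≤ u₂ ∧ u₁ + u₂ = 1 ∧ γ z = u₁ * γ x + u₂ * γ y := by
  obtain ⟨u₁, u₂, h1, h2, h3, rfl⟩ := hz
  exact ⟨u₁, u₂, h1, h2, h3, by rw [map_add, map_smul, map_smul]; rfl⟩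

theorem pt_val_ne_zero (hCG : IsCartanGraph ρ C) (hconn : CGConnected ρ C)
    (hRS : IsRootSystemOfType ρ C (realRootsAt ρ C)) (a : A)
    (bβ : Module.Basis (Fin r) ℝ (Module.Dual ℝ (Vr r))) {c : A} {x : Vr r}
    (hx : x ∈ KcS hconn a bβ c) {γ : Module.Dual ℝ (Vr r)} (hγ : γ ∈ geoR ρ C a bβ) :
    γ x ≠ 0 := by
  rcases posOn_dichotomy hCG hconn hRS a bβ c hγ with h | h
  · exact ne_of_gt (h x hx)
  · have := h x hx
    simp only [LinearMap.neg_apply] at this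
    linarith

theorem seg_neg_lemma (hCG : IsCartanGraph ρ C) (hconn : CGConnected ρ C)
    (hRS : IsRootSystemOfType ρ C (realRootsAt ρ C)) (a : A)
    (bβ : Module.Basis (Fin r) ℝ (Module.Dual ℝ (Vr r))) {b b' : A} {x y z : Vr r}
    (hx : x ∈ KcS hconn a bβ b) (hy : y ∈ KcS hconn a bβ b') (hz : z ∈ segment ℝ x y)
    {γ : Module.Dual ℝ (Vr r)} (hγ : γ ∈ geoR ρ C a bβ)
    (h1 : PosOnP hconn a bβ γ b) (h2 : γ z ≤ 0) : γ ∈ SepS hconn a bβ b b' := by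
  refine ⟨hγ, h1, ?_⟩
  have hγx : 0 < γ x := h1 x hx
  have hne : γ y ≠ 0 := pt_val_ne_zero hCG hconn hRS a bβ hy hγ
  obtain ⟨u₁, u₂, hu1, hu2, hu12, hval⟩ := seg_val hz
  have hγy : γ y < 0 := by
    by_contra hcon
    push_neg at hcon
    have hy' : 0 < γ y := lt_of_le_of_ne hcon (Ne.symm hne)
    have t1 : 0 ≤ u₁ * γ x := mul_nonneg hu1 (le_of_lt hγx)
    have t2 : 0 ≤ u₂ * γ y := mul_nonneg hu2 (le_of_lt hy')
    have h4 : u₁ * γ x = 0 := by linarith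
    have h5 : u₁ = 0 := by
      rcases mul_eq_zero.mp h4 with h | h
      · exact h
      · linarith
    have h6 : u₂ = 1 := by linarith
    rw [h5, h6] at hval
    simp at hval
    linarith
  rcases posOn_dichotomy hCG hconn hRS a bβ b' hγ with h3 | h3
  · exact absurd (h3 y hy) (by linarith)
  · exact h3

theorem seg_pos_lemma (hCG : IsCartanGraph ρ C) (hconn : CGConnected ρ C)
    (hRS : IsRootSystemOfType ρ C (realRootsAt ρ C)) (a : A)
    (bβ : Module.Basis (Fin r) ℝ (Module.Dual ℝ (Vr r))) {b b' : A} {x y z : Vr r}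
    (hx : x ∈ KcS hconn a bβ b) (hy : y ∈ KcS hconn a bβ b') (hz : z ∈ segment ℝ x y)
    {γ : Module.Dual ℝ (Vr r)} (hγ : γ ∈ geoR ρ C a bβ)
    (h1 : PosOnP hconn a bβ (-γ) b') (h2 : 0 ≤ γ z) : PosOnP hconn a bβ γ b := by
  have hγy : γ y < 0 := by
    have := h1 y hy
    simp only [LinearMap.neg_apply] at this
    linarith
  rcases posOn_dichotomy hCG hconn hRS a bβ b hγ with h3 | h3
  · exact h3
  · exfalso
    have hγx : γ x < 0 := by
      have := h3 x hx
      simp only [LinearMap.neg_apply] at this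
      linarith
    obtain ⟨u₁, u₂, hu1, hu2, hu12, hval⟩ := seg_val hz
    have t1 : u₁ * γ x ≤ 0 := mul_nonpos_of_nonneg_of_nonpos hu1 (le_of_lt hγx)
    have t2 : u₂ * γ y ≤ 0 := mul_nonpos_of_nonneg_of_nonpos hu2 (le_of_lt hγy)
    have h4 : u₁ * γ x = 0 ∧ u₂ * γ y = 0 := by constructor <;> linarith
    have h5 : u₁ = 0 := by
      rcases mul_eq_zero.mp h4.1 with h | h
      · exact h
      · linarith
    have h6 : u₂ = 0 := by
      rcases mul_eq_zero.mp h4.2 with h | h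
      · exact h
      · linarith
    rw [h5, h6] at hu12
    linarith

theorem posOn_closure_nonneg (hCG : IsCartanGraph ρ C) (hconn : CGConnected ρ C)
    (hRS : IsRootSystemOfType ρ C (realRootsAt ρ C)) (a : A)
    (bβ : Module.Basis (Fin r) ℝ (Module.Dual ℝ (Vr r))) {c : A} {γ : Module.Dual ℝ (Vr r)}
    (hγ : γ ∈ geoR ρ C a bβ) (h : PosOnP hconn a bβ γ c) {z : Vr r}
    (hzc : z ∈ closure (KcS hconn a bβ c)) : 0 ≤ γ z := by
  obtain ⟨α, hαR, hαpos, rfl⟩ := posOn_repr hCG hconn hRS a bβ c hγ h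
  exact nonneg_of_posroot_closure hCG hconn a bβ c hαpos hzc

theorem sep_split (hCG : IsCartanGraph ρ C) (hconn : CGConnected ρ C)
    (hsc : CGSimplyConnected ρ C) (hRS : IsRootSystemOfType ρ C (realRootsAt ρ C)) (a : A)
    (bβ : Module.Basis (Fin r) ℝ (Module.Dual ℝ (Vr r))) {b b' e : A} {x y z : Vr r}
    (hx : x ∈ KcS hconn a bβ b) (hy : y ∈ KcS hconn a bβ b') (hz : z ∈ segment ℝ x y)
    (he : z ∈ closure (KcS hconn a bβ e)) :
    SepS hconn a bβ b e ⊆ SepS hconn a bβ b b' ∧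
    SepS hconn a bβ e b' ⊆ SepS hconn a bβ b b' ∧
    (SepS hconn a bβ b e).ncard + (SepS hconn a bβ e b').ncard
      = (SepS hconn a bβ b b').ncard := by
  have sub1 : SepS hconn a bβ b e ⊆ SepS hconn a bβ b b' := by
    rintro γ ⟨hγ, h1, h2⟩
    have h3 : 0 ≤ (-γ) z := posOn_closure_nonneg hCG hconn hRS a bβ
      (geoR_neg hCG hconn hRS a bβ hγ) h2 he
    simp only [LinearMap.neg_apply] at h3
    exact seg_neg_lemma hCG hconn hRS a bβ hx hy hz hγ h1 (by linarith)
  have sub2 : SepS hconn a bβ e b' ⊆ SepS hconn a bβ b b' := by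
    rintro γ ⟨hγ, h1, h2⟩
    have h3 : 0 ≤ γ z := posOn_closure_nonneg hCG hconn hRS a bβ hγ h1 he
    exact ⟨hγ, seg_pos_lemma hCG hconn hRS a bβ hx hy hz hγ h2 h3, h2⟩
  refine ⟨sub1, sub2, ?_⟩
  have hdisj : Disjoint (SepS hconn a bβ b e) (SepS hconn a bβ e b') := by
    rw [Set.disjoint_left]
    rintro γ ⟨_, _, h2⟩ ⟨_, h1', _⟩
    exact posOn_not_both hCG hconn a bβ e h1' h2
  have hu : SepS hconn a bβ b e ∪ SepS hconn a bβ e b' = SepS hconn a bβ b b' :=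
    subset_antisymm (Set.union_subset sub1 sub2) (sep_union_sub hCG hconn hRS a bβ b e b')
  rw [← hu, Set.ncard_union_eq hdisj (sep_finite hCG hconn hsc hRS a bβ b e)
    (sep_finite hCG hconn hsc hRS a bβ e b')]

theorem gallery_prefix {a : A} {bβ : Module.Basis (Fin r) ℝ (Module.Dual ℝ (Vr r))}
    {m : ℕ} {g : ℕ → A} {c c' : A} (hg : IsGal ρ C a bβ m g c c') {k : ℕ} (hk : k ≤ m) :
    IsGal ρ C a bβ k g c (g k) :=
  ⟨hg.1, rfl, fun j hj => hg.2.2 j (lt_of_lt_of_le hj hk)⟩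

theorem gallery_suffix {a : A} {bβ : Module.Basis (Fin r) ℝ (Module.Dual ℝ (Vr r))}
    {m : ℕ} {g : ℕ → A} {c c' : A} (hg : IsGal ρ C a bβ m g c c') {k : ℕ} (hk : k ≤ m) :
    IsGal ρ C a bβ (m - k) (fun j => g (k + j)) (g k) c' := by
  refine ⟨by simp, ?_, fun j hj => ?_⟩
  · show g (k + (m - k)) = c'
    rw [show k + (m - k) = m by omega]
    exact hg.2.1
  · show objAdj ρ C a bβ (g (k + j)) (g (k + (j + 1)))
    rw [show k + (j + 1) = (k + j) + 1 by omega]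
    exact hg.2.2 (k + j) (by omega)

/-- The chamber reconstructed from its separation data w.r.t. the base chamber. -/
def PsiSet (hconn : CGConnected ρ C) (a : A)
    (bβ : Module.Basis (Fin r) ℝ (Module.Dual ℝ (Vr r))) (b : A)
    (SS : Set (Module.Dual ℝ (Vr r))) : Set (Vr r) :=
  {v | ∀ γ ∈ geoR ρ C a bβ,
    ((PosOnP hconn a bβ γ b ∧ γ ∉ SS) ∨ (PosOnP hconn a bβ (-γ) b ∧ -γ ∈ SS)) → 0 < γ v}

theorem KcS_eq_psiSet (hCG : IsCartanGraph ρ C) (hconn : CGConnected ρ C)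
    (hRS : IsRootSystemOfType ρ C (realRootsAt ρ C)) (a : A)
    (bβ : Module.Basis (Fin r) ℝ (Module.Dual ℝ (Vr r))) (b c : A) :
    KcS hconn a bβ c = PsiSet hconn a bβ b (SepS hconn a bβ b c) := by
  have key : ∀ γ ∈ geoR ρ C a bβ, (PosOnP hconn a bβ γ c ↔
      ((PosOnP hconn a bβ γ b ∧ γ ∉ SepS hconn a bβ b c) ∨
        (PosOnP hconn a bβ (-γ) b ∧ -γ ∈ SepS hconn a bβ b c))) := by
    intro γ hγ
    constructor
    · intro hpos
      rcases posOn_dichotomy hCG hconn hRS a bβ b hγ with h | h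
      · left
        refine ⟨h, fun hmem => ?_⟩
        exact posOn_not_both hCG hconn a bβ c hpos hmem.2.2
      · right
        exact ⟨h, geoR_neg hCG hconn hRS a bβ hγ, h, by rw [neg_neg]; exact hpos⟩
    · rintro (⟨hb, hnS⟩ | ⟨hnb, hmemS⟩)
      · rcases posOn_dichotomy hCG hconn hRS a bβ c hγ with h | h
        · exact h
        · exact absurd ⟨hγ, hb, h⟩ hnS
      · have := hmemS.2.2
        rwa [neg_neg] at this
  rw [KcS_eq_posOn hconn a bβ c]
  ext v
  constructor
  · intro hv γ hγ hcond
    exact hv γ hγ ((key γ hγ).mpr hcond)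
  · intro hv γ hγ hcond
    exact hv γ hγ ((key γ hγ).mp hcond)

end ProofH

/-- in the geometric realization of a connected simply connected Cartan
graph `𝒞` with real root system, for `b, b' ∈ A`, `x ∈ K^b`, `y ∈ K^{b'}`: the closed
segment `[x,y]` is contained in the union of the closures of the chambers occurring in
minimal galleries from `K^b` to `K^{b'}`, and the set of such chambers is finite. -/
theorem statement_13 {r : ℕ} {A : Type*}
    (ρ : Fin r → A → A) (C : A → Matrix (Fin r) (Fin r) ℤ)
    (hCG : IsCartanGraph ρ C) (hconn : CGConnected ρ C) (hsc : CGSimplyConnected ρ C)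
    (hRS : IsRootSystemOfType ρ C (realRootsAt ρ C))
    (a : A) (bβ : Module.Basis (Fin r) ℝ (Module.Dual ℝ (Vr r)))
    (b b' : A) (u u' : (Fin r → ℤ) → (Fin r → ℤ))
    (hu : WeylHom ρ C b a u) (hu' : WeylHom ρ C b' a u')
    (x y : Vr r) (hx : x ∈ Kch bβ u) (hy : y ∈ Kch bβ u') :
    (segment ℝ x y ⊆ {z : Vr r | ∃ c : A,
      (∃ (m : ℕ) (g : ℕ → A), g 0 = b ∧ g m = b' ∧
        (∀ k < m, objAdj ρ C a bβ (g k) (g (k + 1))) ∧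
        m = galleryDist ρ C a bβ b b' ∧ ∃ k ≤ m, g k = c) ∧
      ∃ uc : (Fin r → ℤ) → (Fin r → ℤ), WeylHom ρ C c a uc ∧
        z ∈ closure (Kch bβ uc)}) ∧
    ({K : Set (Vr r) | ∃ c : A,
      (∃ (m : ℕ) (g : ℕ → A), g 0 = b ∧ g m = b' ∧
        (∀ k < m, objAdj ρ C a bβ (g k) (g (k + 1))) ∧
        m = galleryDist ρ C a bβ b b' ∧ ∃ k ≤ m, g k = c) ∧
      ∃ uc : (Fin r → ℤ) → (Fin r → ℤ), WeylHom ρ C c a uc ∧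
        K = Kch bβ uc}).Finite := by
  have hxb : x ∈ KcS hconn a bβ b := by
    rw [uo_unique hCG hconn hsc a hu] at hx
    exact hx
  have hyb : y ∈ KcS hconn a bβ b' := by
    rw [uo_unique hCG hconn hsc a hu'] at hy
    exact hy
  have hgalne : {m : ℕ | ∃ g : ℕ → A, g 0 = b ∧ g m = b' ∧
      ∀ k < m, objAdj ρ C a bβ (g k) (g (k + 1))}.Nonempty := by
    obtain ⟨m₀, g₀, h1, h2, h3⟩ := gallery_nonempty hCG hconn hsc hRS a bβ b b'
    exact ⟨m₀, g₀, h1, h2, h3⟩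
  obtain ⟨gmin, hmin0, hminm, hminadj⟩ := Nat.sInf_mem hgalne
  constructor
  · -- coverage
    intro z hz
    have hMsub : {γ ∈ geoR ρ C a bβ | PosOnP hconn a bβ γ b ∧ γ z ≤ 0}
        ⊆ SepS hconn a bβ b b' := by
      rintro γ ⟨hγ, h1, h2⟩
      exact seg_neg_lemma hCG hconn hRS a bβ hxb hyb hz hγ h1 h2
    have hMfin : ({γ ∈ geoR ρ C a bβ | PosOnP hconn a bβ γ b ∧ γ z ≤ 0}).Finite :=
      (sep_finite hCG hconn hsc hRS a bβ b b').subset hMsub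
    obtain ⟨e, he⟩ := chamber_cover hCG hconn hsc hRS a bβ _ b z hMfin le_rfl
    by_cases hbe : SepS hconn a bβ b e = ∅
    · have hKeq : KcS hconn a bβ b = KcS hconn a bβ e :=
        KcS_eq_of_sep_empty hCG hconn hRS a bβ hbe
      refine ⟨b, ⟨galleryDist ρ C a bβ b b', gmin, hmin0, hminm, hminadj, rfl, 0,
        Nat.zero_le _, hmin0⟩, uo hconn a b, huo hconn a b, ?_⟩
      show z ∈ closure (KcS hconn a bβ b)
      rw [hKeq]
      exact he
    · by_cases heb : SepS hconn a bβ e b' = ∅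
      · have hKeq : KcS hconn a bβ e = KcS hconn a bβ b' :=
          KcS_eq_of_sep_empty hCG hconn hRS a bβ heb
        refine ⟨b', ⟨galleryDist ρ C a bβ b b', gmin, hmin0, hminm, hminadj, rfl,
          galleryDist ρ C a bβ b b', le_rfl, hminm⟩, uo hconn a b', huo hconn a b', ?_⟩
        show z ∈ closure (KcS hconn a bβ b')
        rw [← hKeq]
        exact he
      · obtain ⟨sub1, sub2, hsum⟩ := sep_split hCG hconn hsc hRS a bβ hxb hyb hz he
        have hfin1 := sep_finite hCG hconn hsc hRS a bβ b e
        have hfin2 := sep_finite hCG hconn hsc hRS a bβ e b'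
        have hn1 : 0 < (SepS hconn a bβ b e).ncard :=
          (Set.ncard_pos hfin1).mpr (Set.nonempty_iff_ne_empty.mpr hbe)
        have hn2 : 0 < (SepS hconn a bβ e b').ncard :=
          (Set.ncard_pos hfin2).mpr (Set.nonempty_iff_ne_empty.mpr heb)
        obtain ⟨g1, hg1⟩ := gallery_exists hCG hconn hsc hRS a bβ _ b e rfl hn1
        obtain ⟨g2, hg2⟩ := gallery_exists hCG hconn hsc hRS a bβ _ e b' rfl hn2
        generalize hN1 : (SepS hconn a bβ b e).ncard = n1 at hg1 hn1 hsum
        generalize hN2 : (SepS hconn a bβ e b').ncard = n2 at hg2 hn2 hsum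
        have hgd : galleryDist ρ C a bβ b b' = n1 + n2 := by
          rw [galleryDist_main hCG hconn hsc hRS a bβ b b' (by rw [← hsum]; omega), ← hsum]
        refine ⟨e, ⟨n1 + n2, fun k => if k < n1 then g1 k else g2 (k - n1), ?_, ?_, ?_,
          hgd.symm, n1, by omega, ?_⟩, uo hconn a e, huo hconn a e, he⟩
        · show (if 0 < n1 then g1 0 else g2 (0 - n1)) = b
          rw [if_pos hn1]
          exact hg1.1
        · show (if n1 + n2 < n1 then g1 (n1 + n2) else g2 (n1 + n2 - n1)) = b'
          rw [if_neg (by omega), show n1 + n2 - n1 = n2 by omega]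
          exact hg2.2.1
        · intro k hk
          by_cases hc1 : k + 1 < n1
          · show objAdj ρ C a bβ (if k < n1 then g1 k else g2 (k - n1))
              (if k + 1 < n1 then g1 (k + 1) else g2 (k + 1 - n1))
            rw [if_pos (by omega), if_pos hc1]
            exact hg1.2.2 k (by omega)
          · by_cases hc2 : k < n1
            · have hkn : k + 1 = n1 := by omega
              show objAdj ρ C a bβ (if k < n1 then g1 k else g2 (k - n1))
                (if k + 1 < n1 then g1 (k + 1) else g2 (k + 1 - n1))
              rw [if_pos hc2, if_neg hc1, show k + 1 - n1 = 0 by omega]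
              have h20 : g2 0 = g1 (k + 1) := by
                rw [hg2.1, hkn]
                exact hg1.2.1.symm
              rw [h20]
              exact hg1.2.2 k (by omega)
            · show objAdj ρ C a bβ (if k < n1 then g1 k else g2 (k - n1))
                (if k + 1 < n1 then g1 (k + 1) else g2 (k + 1 - n1))
              rw [if_neg hc2, if_neg hc1, show k + 1 - n1 = (k - n1) + 1 by omega]
              exact hg2.2.2 (k - n1) (by omega)
        · show (if n1 < n1 then g1 n1 else g2 (n1 - n1)) = e
          rw [if_neg (by omega), show n1 - n1 = 0 by omega]
          exact hg2.1
  · -- finiteness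
    by_cases hbb : b = b'
    · subst hbb
      apply Set.Finite.subset (Set.finite_singleton (KcS hconn a bβ b))
      rintro K ⟨c, ⟨m, g, hg0, hgm, hadj, hmeq, k, hk, hkc⟩, uc, huc, rfl⟩
      have hm0 : m = 0 := by rw [hmeq, galleryDist_self]
      have hk0 : k = 0 := by omega
      have hcb : c = b := by rw [← hkc, hk0, hg0]
      subst hcb
      rw [Set.mem_singleton_iff, uo_unique hCG hconn hsc a huc]
      rfl
    · by_cases hΦ0 : SepS hconn a bβ b b' = ∅
      · have hgd2 := galleryDist_degen hCG hconn hsc hRS a bβ b b' hbb hΦ0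
        have hKeq : KcS hconn a bβ b = KcS hconn a bβ b' :=
          KcS_eq_of_sep_empty hCG hconn hRS a bβ hΦ0
        apply Set.Finite.subset ((Set.finite_range
          (fun i => KcS hconn a bβ (ρ i b))).insert (KcS hconn a bβ b))
        rintro K ⟨c, ⟨m, g, hg0, hgm, hadj, hmeq, k, hk, hkc⟩, uc, huc, rfl⟩
        subst hkc
        rw [uo_unique hCG hconn hsc a huc]
        have hm2 : m = 2 := hmeq.trans hgd2
        have hk2 : k ≤ 2 := by omega
        interval_cases k
        · rw [hg0]
          exact Set.mem_insert _ _
        · have hadj0 : objAdj ρ C a bβ b (g 1) := by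
            have hstep := hadj 0 (by omega)
            rwa [hg0] at hstep
          obtain ⟨i, hKi⟩ := objAdj_structure hCG hconn hsc hRS a bβ hadj0
          apply Set.mem_insert_of_mem
          exact ⟨i, hKi.symm⟩
        · rw [hm2] at hgm
          rw [hgm]
          show KcS hconn a bβ b' ∈ _
          rw [← hKeq]
          exact Set.mem_insert _ _
      · have hΦfin := sep_finite hCG hconn hsc hRS a bβ b b'
        have hΦpos : 0 < (SepS hconn a bβ b b').ncard :=
          (Set.ncard_pos hΦfin).mpr (Set.nonempty_iff_ne_empty.mpr hΦ0)
        have hgd := galleryDist_main hCG hconn hsc hRS a bβ b b' hΦpos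
        apply Set.Finite.subset (Set.Finite.image (PsiSet hconn a bβ b)
          (Set.Finite.finite_subsets hΦfin))
        rintro K ⟨c, ⟨m, g, hg0, hgm, hadj, hmeq, k, hk, hkc⟩, uc, huc, rfl⟩
        subst hkc
        have hmcard : m = (SepS hconn a bβ b b').ncard := hmeq.trans hgd
        have hgal : IsGal ρ C a bβ m g b b' := ⟨hg0, hgm, hadj⟩
        have hc1 : (SepS hconn a bβ b (g k)).ncard ≤ k :=
          sep_ncard_le_gallery hCG hconn hsc hRS a bβ k g b (g k) (gallery_prefix hgal hk)
        have hc2 : (SepS hconn a bβ (g k) b').ncard ≤ m - k :=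
          sep_ncard_le_gallery hCG hconn hsc hRS a bβ (m - k) _ (g k) b'
            (gallery_suffix hgal hk)
        have hUfin : (SepS hconn a bβ b (g k) ∪ SepS hconn a bβ (g k) b').Finite :=
          (sep_finite hCG hconn hsc hRS a bβ b (g k)).union
            (sep_finite hCG hconn hsc hRS a bβ (g k) b')
        have hUcard : (SepS hconn a bβ b (g k) ∪ SepS hconn a bβ (g k) b').ncard
            ≤ (SepS hconn a bβ b b').ncard := by
          calc (SepS hconn a bβ b (g k) ∪ SepS hconn a bβ (g k) b').ncard
              ≤ (SepS hconn a bβ b (g k)).ncard + (SepS hconn a bβ (g k) b').ncard :=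
                Set.ncard_union_le _ _
            _ ≤ k + (m - k) := by omega
            _ = m := by omega
            _ = (SepS hconn a bβ b b').ncard := hmcard
        have hEq : SepS hconn a bβ b b'
            = SepS hconn a bβ b (g k) ∪ SepS hconn a bβ (g k) b' :=
          Set.eq_of_subset_of_ncard_le (sep_union_sub hCG hconn hRS a bβ b (g k) b')
            hUcard hUfin
        refine ⟨SepS hconn a bβ b (g k), ?_, ?_⟩
        · show SepS hconn a bβ b (g k) ⊆ SepS hconn a bβ b b'
          rw [hEq]
          exact Set.subset_union_left
        · rw [uo_unique hCG hconn hsc a huc]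
          exact (KcS_eq_psiSet hCG hconn hRS a bβ b (g k)).symm
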